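/- For a DMC with zero zero-error capacity (C₀ = 0, with feedback), the zero-rate erasure exponent of error-free feedback block codes equals the two-message erasure exponent: E_x(0) = E_x,2, where E_x(0) = sup over error-free reliable sequences with rate → 0 and message count → ∞ of liminf_n (−log P_era^{(n)})/n, and E_x,2 = liminf_n (−log P_era(2, n, 1))/n. -/

import Mathlib

open scoped BigOperators

/-- A fixed-length block code over input alphabet `X`, output alphabet `Y`, with
noiseless delay-free feedback, `M` messages, block length `n`, randomized decoding
with lists of size at most `L` and an erasure option (`none`). -/
structure FBCode (X Y : Type) [Fintype X] [Fintype Y] (M n L : ℕ) where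
  enc : Fin M → (t : Fin n) → (Fin t.1 → Y) → X
  dec : (Fin n → Y) → Option (Finset (Fin M)) → ℝ
  dec_nonneg : ∀ y o, 0 ≤ dec y o
  dec_sum : ∀ y, ∑ o : Option (Finset (Fin M)), dec y o = 1
  dec_size : ∀ y S, dec y (some S) ≠ 0 → S.card ≤ L

namespace FBCode

variable {X Y : Type} [Fintype X] [Fintype Y]

/-- Probability of observing output sequence `y` when message `m` is sent over the DMC `W`. -/
noncomputable def outProb (W : X → Y → ℝ) {M n L : ℕ} (c : FBCode X Y M n L)
    (m : Fin M) (y : Fin n → Y) : ℝ :=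
  ∏ t : Fin n, W (c.enc m t (fun i => y ⟨i.1, lt_trans i.2 t.2⟩)) (y t)

/-- Erasure probability of the code, uniform prior on messages. -/
noncomputable def Pera (W : X → Y → ℝ) {M n L : ℕ} (c : FBCode X Y M n L) : ℝ :=
  (M : ℝ)⁻¹ * ∑ m : Fin M, ∑ y : Fin n → Y, outProb W c m y * c.dec y none

/-- (Undetected) error probability of the code, uniform prior on messages. -/
noncomputable def Perr (W : X → Y → ℝ) {M n L : ℕ} (c : FBCode X Y M n L) : ℝ :=
  (M : ℝ)⁻¹ * ∑ m : Fin M, ∑ y : Fin n → Y,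
    outProb W c m y * ∑ S : Finset (Fin M), if m ∈ S then 0 else c.dec y (some S)

end FBCode

/-- Minimum error probability of length-`n` feedback codes with `M` equiprobable
messages, list size `L`, erasure probability at most `p`. -/
noncomputable def PeMin {X Y : Type} [Fintype X] [Fintype Y] (W : X → Y → ℝ)
    (M n L : ℕ) (p : ℝ) : ℝ :=
  sInf {e | ∃ c : FBCode X Y M n L, FBCode.Pera W c ≤ p ∧ FBCode.Perr W c = e}

/-- Minimum erasure probability of length-`n` error-free feedback codes with `M`
equiprobable messages and list size `L`. -/
noncomputable def PeraMin {X Y : Type} [Fintype X] [Fintype Y] (W : X → Y → ℝ)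
    (M n L : ℕ) : ℝ :=
  sInf {r | ∃ c : FBCode X Y M n L, FBCode.Perr W c = 0 ∧ FBCode.Pera W c = r}

open Filter


open Finset

lemma pi_succ_sum {Z : Type} [Fintype Z] {k : ℕ} (f : (Fin (k+1) → Z) → ℝ) :
    ∑ z, f z = ∑ z0 : Z, ∑ z' : Fin k → Z, f (Fin.cons (α := fun _ => Z) z0 z') := by
  rw [← Equiv.sum_comp (Fin.consEquiv (fun _ => Z)) f, Fintype.sum_prod_type]
  rfl

lemma cons_prefix_eq {Z : Type} {k : ℕ} (z0 : Z) (z'₁ z'₂ : Fin k → Z) (s : Fin k)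
    (h : ∀ j, j < s → z'₁ j = z'₂ j) :
    ∀ j : Fin (k+1), j < s.succ → Fin.cons (α := fun _ => Z) z0 z'₁ j = Fin.cons (α := fun _ => Z) z0 z'₂ j := by
  intro j hj
  rcases Fin.eq_zero_or_eq_succ j with rfl | ⟨i, rfl⟩
  · simp
  · simp only [Fin.cons_succ]
    exact h i (by simpa [Fin.succ_lt_succ_iff] using hj)

lemma adaptive_sum {Z : Type} [Fintype Z] [Nonempty Z] :
    ∀ {k : ℕ} (Q : Fin k → (Fin k → Z) → Z → ℝ),
    (∀ (s : Fin k) (z₁ z₂ : Fin k → Z), (∀ j, j < s → z₁ j = z₂ j) → Q s z₁ = Q s z₂) →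
    (∀ s z, ∑ w, Q s z w = 1) →
    ∑ z : Fin k → Z, ∏ s, Q s z (z s) = 1 := by
  intro k
  induction k with
  | zero => intro Q _ _; simp
  | succ k ih =>
    intro Q hmeas hrow
    rw [pi_succ_sum]
    have hQ0 : ∀ (z : Fin (k+1) → Z) (w : Z),
        Q 0 z w = Q 0 (fun _ => Classical.arbitrary Z) w := by
      intro z w
      exact congrFun (hmeas 0 z _ (fun j hj => absurd hj (by simp [Fin.lt_def]))) w
    have step : ∀ z0 : Z, ∑ z' : Fin k → Z, ∏ s, Q s (Fin.cons (α := fun _ => Z) z0 z') ((Fin.cons (α := fun _ => Z) z0 z') s)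
        = Q 0 (fun _ => Classical.arbitrary Z) z0 := by
      intro z0
      have : ∀ z' : Fin k → Z, ∏ s : Fin (k+1), Q s (Fin.cons (α := fun _ => Z) z0 z') ((Fin.cons (α := fun _ => Z) z0 z') s)
          = Q 0 (fun _ => Classical.arbitrary Z) z0 *
            ∏ s : Fin k, Q s.succ (Fin.cons (α := fun _ => Z) z0 z') (z' s) := by
        intro z'
        rw [Fin.prod_univ_succ]
        simp only [Fin.cons_zero, Fin.cons_succ, hQ0]
      rw [Finset.sum_congr rfl (fun z' _ => this z'), ← Finset.mul_sum]
      rw [ih (fun s z' => Q s.succ (Fin.cons (α := fun _ => Z) z0 z'))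
        (fun s z₁ z₂ h => hmeas s.succ _ _ (cons_prefix_eq z0 z₁ z₂ s h))
        (fun s z' => hrow s.succ _), mul_one]
    rw [Finset.sum_congr rfl (fun z0 _ => step z0)]
    exact hrow 0 _
lemma adaptive_tail {Z : Type} [Fintype Z] [Nonempty Z] (Bp : Z → Prop) [DecidablePred Bp]
    (ε : ℝ) (hε : 0 ≤ ε) :
    ∀ {k : ℕ} (Q : Fin k → (Fin k → Z) → Z → ℝ) (j : ℕ),
    (∀ (s : Fin k) (z₁ z₂ : Fin k → Z), (∀ i, i < s → z₁ i = z₂ i) → Q s z₁ = Q s z₂) →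
    (∀ s z w, 0 ≤ Q s z w) →
    (∀ s z, ∑ w, Q s z w = 1) →
    (∀ s z, ∑ w ∈ Finset.univ.filter Bp, Q s z w ≤ ε) →
    ∑ z : Fin k → Z, (∏ s, Q s z (z s)) *
        (if j ≤ (Finset.univ.filter (fun s => Bp (z s))).card then (1:ℝ) else 0)
      ≤ (k.choose j : ℝ) * ε ^ j := by
  intro k
  induction k with
  | zero =>
    intro Q j _ _ _ _
    rcases Nat.eq_zero_or_pos j with rfl | hj
    · simp
    · simp [Nat.le_zero, Nat.pos_iff_ne_zero.mp hj, Nat.choose_eq_zero_of_lt hj,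
        mul_nonneg (Nat.cast_nonneg _) (pow_nonneg hε j)]
  | succ k ih =>
    intro Q j hmeas hnn hrow hB
    -- nonnegativity of products
    have hPnn : ∀ (z : Fin (k+1) → Z), 0 ≤ ∏ s, Q s z (z s) :=
      fun z => Finset.prod_nonneg (fun s _ => hnn s z (z s))
    rcases Nat.eq_zero_or_pos j with rfl | hjpos
    · -- j = 0 : bound by total mass 1
      have h1 : ∑ z : Fin (k+1) → Z, (∏ s, Q s z (z s)) *
          (if 0 ≤ (Finset.univ.filter (fun s => Bp (z s))).card then (1:ℝ) else 0)
          ≤ ∑ z : Fin (k+1) → Z, ∏ s, Q s z (z s) := by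
        apply Finset.sum_le_sum
        intro z _
        simp [hPnn z]
      rw [adaptive_sum Q hmeas hrow] at h1
      simpa using h1
    obtain ⟨j', rfl⟩ := Nat.exists_eq_succ_of_ne_zero (Nat.pos_iff_ne_zero.mp hjpos)
    rw [pi_succ_sum]
    have hQ0 : ∀ (z : Fin (k+1) → Z) (w : Z),
        Q 0 z w = Q 0 (fun _ => Classical.arbitrary Z) w := by
      intro z w
      exact congrFun (hmeas 0 z _ (fun i hi => absurd hi (by simp [Fin.lt_def]))) w
    set q : Z → ℝ := fun w => Q 0 (fun _ => Classical.arbitrary Z) w with hq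
    have hqnn : ∀ w, 0 ≤ q w := fun w => hnn 0 _ w
    -- count decomposition
    have hcount : ∀ (z0 : Z) (z' : Fin k → Z),
        (Finset.univ.filter (fun s : Fin (k+1) => Bp ((Fin.cons (α := fun _ => Z) z0 z') s))).card
        = (if Bp z0 then 1 else 0) + (Finset.univ.filter (fun s : Fin k => Bp (z' s))).card := by
      intro z0 z'
      rw [Finset.card_filter, Finset.card_filter, Fin.sum_univ_succ]
      simp [Fin.cons_succ]
    -- product decomposition
    have hprod : ∀ (z0 : Z) (z' : Fin k → Z),
        ∏ s : Fin (k+1), Q s (Fin.cons (α := fun _ => Z) z0 z')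
          ((Fin.cons (α := fun _ => Z) z0 z') s)
        = q z0 * ∏ s : Fin k, Q s.succ (Fin.cons (α := fun _ => Z) z0 z') (z' s) := by
      intro z0 z'
      rw [Fin.prod_univ_succ]
      simp only [Fin.cons_zero, Fin.cons_succ, hQ0, hq]
    -- the inner (shifted) kernels
    have ihB : ∀ (z0 : Z) (jj : ℕ),
        ∑ z' : Fin k → Z, (∏ s, Q s.succ (Fin.cons (α := fun _ => Z) z0 z') (z' s)) *
          (if jj ≤ (Finset.univ.filter (fun s => Bp (z' s))).card then (1:ℝ) else 0)
        ≤ (k.choose jj : ℝ) * ε ^ jj := by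
      intro z0 jj
      exact ih (fun s z' => Q s.succ (Fin.cons (α := fun _ => Z) z0 z')) jj
        (fun s z₁ z₂ h => hmeas s.succ _ _ (cons_prefix_eq z0 z₁ z₂ s h))
        (fun s z' w => hnn s.succ _ w)
        (fun s z' => hrow s.succ _)
        (fun s z' => hB s.succ _)
    have hP'nn : ∀ (z0 : Z) (z' : Fin k → Z),
        0 ≤ ∏ s : Fin k, Q s.succ (Fin.cons (α := fun _ => Z) z0 z') (z' s) :=
      fun z0 z' => Finset.prod_nonneg (fun s _ => hnn _ _ _)
    have hP'sum : ∀ z0 : Z,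
        ∑ z' : Fin k → Z, ∏ s : Fin k, Q s.succ (Fin.cons (α := fun _ => Z) z0 z') (z' s) = 1 := by
      intro z0
      exact adaptive_sum _ (fun s z₁ z₂ h => hmeas s.succ _ _ (cons_prefix_eq z0 z₁ z₂ s h))
        (fun s z' => hrow s.succ _)
    -- rewrite the big sum
    have hrw : ∀ z0 : Z,
        ∑ z' : Fin k → Z, (∏ s : Fin (k+1), Q s (Fin.cons (α := fun _ => Z) z0 z')
            ((Fin.cons (α := fun _ => Z) z0 z') s)) *
          (if j'+1 ≤ (Finset.univ.filter (fun s : Fin (k+1) =>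
              Bp ((Fin.cons (α := fun _ => Z) z0 z') s))).card then (1:ℝ) else 0)
        = q z0 * ∑ z' : Fin k → Z,
            (∏ s : Fin k, Q s.succ (Fin.cons (α := fun _ => Z) z0 z') (z' s)) *
            (if j'+1 ≤ (if Bp z0 then 1 else 0) +
                (Finset.univ.filter (fun s : Fin k => Bp (z' s))).card then (1:ℝ) else 0) := by
      intro z0
      rw [Finset.mul_sum]
      apply Finset.sum_congr rfl
      intro z' _
      rw [hprod z0 z', hcount z0 z']
      ring
    rw [Finset.sum_congr rfl (fun z0 _ => hrw z0)]
    -- split over Bp z0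
    rw [← Finset.sum_filter_add_sum_filter_not Finset.univ Bp]
    have hin : ∀ z0 ∈ Finset.univ.filter Bp,
        q z0 * ∑ z' : Fin k → Z,
            (∏ s : Fin k, Q s.succ (Fin.cons (α := fun _ => Z) z0 z') (z' s)) *
            (if j'+1 ≤ (if Bp z0 then 1 else 0) +
                (Finset.univ.filter (fun s : Fin k => Bp (z' s))).card then (1:ℝ) else 0)
        ≤ q z0 * ((k.choose j' : ℝ) * ε ^ j') := by
      intro z0 hz0
      have hBz0 : Bp z0 := (Finset.mem_filter.mp hz0).2
      apply mul_le_mul_of_nonneg_left _ (hqnn z0)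
      have : ∀ z' : Fin k → Z,
          (if j'+1 ≤ (if Bp z0 then 1 else 0) +
              (Finset.univ.filter (fun s : Fin k => Bp (z' s))).card then (1:ℝ) else 0)
          = (if j' ≤ (Finset.univ.filter (fun s : Fin k => Bp (z' s))).card then (1:ℝ) else 0) := by
        intro z'
        simp [hBz0, Nat.add_comm 1, Nat.succ_le_succ_iff]
      rw [Finset.sum_congr rfl (fun z' _ => by rw [this z'])]
      exact ihB z0 j'
    have hout : ∀ z0 ∈ Finset.univ.filter (fun w => ¬ Bp w),
        q z0 * ∑ z' : Fin k → Z,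
            (∏ s : Fin k, Q s.succ (Fin.cons (α := fun _ => Z) z0 z') (z' s)) *
            (if j'+1 ≤ (if Bp z0 then 1 else 0) +
                (Finset.univ.filter (fun s : Fin k => Bp (z' s))).card then (1:ℝ) else 0)
        ≤ q z0 * ((k.choose (j'+1) : ℝ) * ε ^ (j'+1)) := by
      intro z0 hz0
      have hBz0 : ¬ Bp z0 := (Finset.mem_filter.mp hz0).2
      apply mul_le_mul_of_nonneg_left _ (hqnn z0)
      have : ∀ z' : Fin k → Z,
          (if j'+1 ≤ (if Bp z0 then 1 else 0) +
              (Finset.univ.filter (fun s : Fin k => Bp (z' s))).card then (1:ℝ) else 0)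
          = (if j'+1 ≤ (Finset.univ.filter (fun s : Fin k => Bp (z' s))).card then (1:ℝ) else 0) := by
        intro z'; simp [hBz0]
      rw [Finset.sum_congr rfl (fun z' _ => by rw [this z'])]
      exact ihB z0 (j'+1)
    have hsum_q_in : ∑ z0 ∈ Finset.univ.filter Bp, q z0 ≤ ε := hB 0 (fun _ => Classical.arbitrary Z)
    have hsum_q_all : ∑ z0 ∈ Finset.univ.filter (fun w => ¬ Bp w), q z0 ≤ 1 := by
      have h1 : ∑ z0 ∈ Finset.univ.filter (fun w => ¬ Bp w), q z0 ≤ ∑ z0 : Z, q z0 :=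
        Finset.sum_le_sum_of_subset_of_nonneg (Finset.filter_subset _ _) (fun w _ _ => hqnn w)
      rw [hrow 0 _] at h1
      exact h1
    have hnn1 : (0:ℝ) ≤ (k.choose j' : ℝ) * ε ^ j' :=
      mul_nonneg (Nat.cast_nonneg _) (pow_nonneg hε _)
    have hnn2 : (0:ℝ) ≤ (k.choose (j'+1) : ℝ) * ε ^ (j'+1) :=
      mul_nonneg (Nat.cast_nonneg _) (pow_nonneg hε _)
    calc ∑ z0 ∈ Finset.univ.filter Bp, _ + ∑ z0 ∈ Finset.univ.filter (fun w => ¬ Bp w), _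
        ≤ ∑ z0 ∈ Finset.univ.filter Bp, q z0 * ((k.choose j' : ℝ) * ε ^ j')
          + ∑ z0 ∈ Finset.univ.filter (fun w => ¬ Bp w), q z0 * ((k.choose (j'+1) : ℝ) * ε ^ (j'+1)) :=
          add_le_add (Finset.sum_le_sum hin) (Finset.sum_le_sum hout)
      _ = (∑ z0 ∈ Finset.univ.filter Bp, q z0) * ((k.choose j' : ℝ) * ε ^ j')
          + (∑ z0 ∈ Finset.univ.filter (fun w => ¬ Bp w), q z0) * ((k.choose (j'+1) : ℝ) * ε ^ (j'+1)) := by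
          rw [Finset.sum_mul, Finset.sum_mul]
      _ ≤ ε * ((k.choose j' : ℝ) * ε ^ j') + 1 * ((k.choose (j'+1) : ℝ) * ε ^ (j'+1)) :=
          add_le_add (mul_le_mul_of_nonneg_right hsum_q_in hnn1)
            (mul_le_mul_of_nonneg_right hsum_q_all hnn2)
      _ = ((k+1).choose (j'+1) : ℝ) * ε ^ (j'+1) := by
          rw [Nat.choose_succ_succ]
          push_cast
          ring
section Basics

open Finset FBCode

variable {X Y : Type} [Fintype X] [Fintype Y]

lemma nonempty_Y [Nonempty X] (W : X → Y → ℝ) (hW1 : ∀ x, ∑ y, W x y = 1) : Nonempty Y := by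
  by_contra h
  rw [not_nonempty_iff] at h
  have h1 := hW1 (Classical.arbitrary X)
  rw [Finset.univ_eq_empty, Finset.sum_empty] at h1
  exact one_ne_zero h1.symm

lemma W_le_one (W : X → Y → ℝ) (hW0 : ∀ x y, 0 ≤ W x y) (hW1 : ∀ x, ∑ y, W x y = 1)
    (x : X) (y : Y) : W x y ≤ 1 := by
  have := Finset.single_le_sum (f := fun y => W x y) (fun i _ => hW0 x i) (Finset.mem_univ y)
  rw [hW1 x] at this
  exact this

lemma outProb_nonneg (W : X → Y → ℝ) (hW0 : ∀ x y, 0 ≤ W x y) {M n L : ℕ}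
    (c : FBCode X Y M n L) (m : Fin M) (y : Fin n → Y) : 0 ≤ outProb W c m y :=
  Finset.prod_nonneg (fun t _ => hW0 _ _)

lemma sum_outProb [Nonempty Y] (W : X → Y → ℝ) (hW1 : ∀ x, ∑ y, W x y = 1) {M n L : ℕ}
    (c : FBCode X Y M n L) (m : Fin M) : ∑ y : Fin n → Y, outProb W c m y = 1 := by
  have := adaptive_sum (Z := Y) (k := n)
    (fun t y v => W (c.enc m t (fun i => y ⟨i.1, lt_trans i.2 t.2⟩)) v)
    (by
      intro t y₁ y₂ h
      have hpre : (fun i : Fin t.1 => y₁ ⟨i.1, lt_trans i.2 t.2⟩)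
          = (fun i : Fin t.1 => y₂ ⟨i.1, lt_trans i.2 t.2⟩) :=
        funext (fun i => h ⟨i.1, lt_trans i.2 t.2⟩ i.2)
      exact congrArg (fun f v => W (c.enc m t f) v) hpre)
    (fun t y => hW1 _)
  exact this

lemma dec_none_sum {M n L : ℕ} (c : FBCode X Y M n L) (y : Fin n → Y) :
    c.dec y none + ∑ S : Finset (Fin M), c.dec y (some S) = 1 := by
  rw [← Fintype.sum_option (fun o => c.dec y o)]
  exact c.dec_sum y

/-- Pointwise error-freeness. -/
lemma dec_eq_zero_of_errorfree (W : X → Y → ℝ) (hW0 : ∀ x y, 0 ≤ W x y) {M n L : ℕ}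
    (c : FBCode X Y M n L) (h : Perr W c = 0) {m : Fin M} {y : Fin n → Y}
    {S : Finset (Fin M)} (hy : 0 < outProb W c m y) (hm : m ∉ S) :
    c.dec y (some S) = 0 := by
  have hMpos : (0:ℝ) < (M:ℝ)⁻¹ := by
    have : 0 < M := m.pos
    positivity
  have hinner_nn : ∀ (m' : Fin M) (y' : Fin n → Y),
      0 ≤ ∑ T : Finset (Fin M), if m' ∈ T then 0 else c.dec y' (some T) :=
    fun m' y' => Finset.sum_nonneg (fun T _ => by
      split
      · exact le_refl 0
      · exact c.dec_nonneg y' (some T))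
  have hterm_nn : ∀ (m' : Fin M) (y' : Fin n → Y),
      0 ≤ outProb W c m' y' * ∑ T : Finset (Fin M), if m' ∈ T then 0 else c.dec y' (some T) :=
    fun m' y' => mul_nonneg (outProb_nonneg W hW0 c m' y') (hinner_nn m' y')
  rw [Perr] at h
  have hsum0 : (∑ m' : Fin M, ∑ y' : Fin n → Y,
      outProb W c m' y' * ∑ T : Finset (Fin M), if m' ∈ T then 0 else c.dec y' (some T)) = 0 := by
    rcases mul_eq_zero.mp h with h' | h'
    · exact absurd h' (ne_of_gt hMpos)
    · exact h'
  have h1 := (Finset.sum_eq_zero_iff_of_nonneg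
    (fun m' _ => Finset.sum_nonneg (fun y' _ => hterm_nn m' y'))).mp hsum0 m (Finset.mem_univ m)
  have h2 := (Finset.sum_eq_zero_iff_of_nonneg (fun y' _ => hterm_nn m y')).mp h1 y (Finset.mem_univ y)
  rcases mul_eq_zero.mp h2 with h' | h'
  · exact absurd h' (ne_of_gt hy)
  · have h3 := (Finset.sum_eq_zero_iff_of_nonneg (fun T _ => by
      split
      · exact le_refl 0
      · exact c.dec_nonneg y (some T))).mp h' S (Finset.mem_univ S)
    simpa [hm] using h3

end Basics
section Greedy

open Finset FBCode

variable {X Y : Type} [Fintype X] [Fintype Y]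

lemma exists_delta [Nonempty X] (W : X → Y → ℝ)
    (hC0 : ∀ x x' : X, ∃ y, 0 < W x y ∧ 0 < W x' y) :
    ∃ δ : ℝ, 0 < δ ∧ ∀ x x' : X, ∃ y, δ ≤ W x y ∧ δ ≤ W x' y := by
  classical
  choose ch h1 h2 using hC0
  have hne : (Finset.univ : Finset (X × X)).Nonempty := Finset.univ_nonempty
  refine ⟨Finset.univ.inf' hne (fun p => min (W p.1 (ch p.1 p.2)) (W p.2 (ch p.1 p.2))), ?_, ?_⟩
  · rw [Finset.lt_inf'_iff]
    exact fun p _ => lt_min (h1 p.1 p.2) (h2 p.1 p.2)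
  · intro x x'
    refine ⟨ch x x', ?_, ?_⟩
    · exact le_trans (Finset.inf'_le _ (Finset.mem_univ (x, x'))) (min_le_left _ _)
    · exact le_trans (Finset.inf'_le _ (Finset.mem_univ (x, x'))) (min_le_right _ _)

lemma exists_common_y (W : X → Y → ℝ) (δ : ℝ)
    (hδ : ∀ x x' : X, ∃ y, δ ≤ W x y ∧ δ ≤ W x' y) :
    ∀ (n : ℕ) (e1 e2 : (t : Fin n) → (Fin t.1 → Y) → X),
    ∃ y : Fin n → Y, ∀ t : Fin n,
      δ ≤ W (e1 t (fun i => y ⟨i.1, lt_trans i.2 t.2⟩)) (y t) ∧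
      δ ≤ W (e2 t (fun i => y ⟨i.1, lt_trans i.2 t.2⟩)) (y t) := by
  intro n
  induction n with
  | zero => exact fun e1 e2 => ⟨Fin.elim0, fun t => t.elim0⟩
  | succ n ih =>
    intro e1 e2
    obtain ⟨y0, hy0a, hy0b⟩ := hδ (e1 0 Fin.elim0) (e2 0 Fin.elim0)
    obtain ⟨y', hy'⟩ := ih (fun t h => e1 t.succ (Fin.cons (α := fun _ => Y) y0 h))
                          (fun t h => e2 t.succ (Fin.cons (α := fun _ => Y) y0 h))
    refine ⟨Fin.cons (α := fun _ => Y) y0 y', ?_⟩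
    intro t
    rcases Fin.eq_zero_or_eq_succ t with rfl | ⟨s, rfl⟩
    · have hpre : (fun i : Fin (0 : Fin (n+1)).1 =>
          Fin.cons (α := fun _ => Y) y0 y' ⟨i.1, lt_trans i.2 (0 : Fin (n+1)).2⟩)
          = Fin.elim0 := funext (fun i => i.elim0)
      rw [hpre, Fin.cons_zero]
      exact ⟨hy0a, hy0b⟩
    · have hpre : (fun i : Fin s.succ.1 =>
          Fin.cons (α := fun _ => Y) y0 y' ⟨i.1, lt_trans i.2 s.succ.2⟩)
          = Fin.cons (α := fun _ => Y) y0 (fun i : Fin s.1 => y' ⟨i.1, lt_trans i.2 s.2⟩) := by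
        funext i
        induction i using Fin.cases with
        | zero => rfl
        | succ i' => rfl
      rw [hpre, Fin.cons_succ]
      exact hy' s

lemma Pera_nonneg (W : X → Y → ℝ) (hW0 : ∀ x y, 0 ≤ W x y) {M n L : ℕ}
    (c : FBCode X Y M n L) : 0 ≤ Pera W c := by
  apply mul_nonneg (by positivity)
  exact Finset.sum_nonneg fun m _ => Finset.sum_nonneg fun y _ =>
    mul_nonneg (outProb_nonneg W hW0 c m y) (c.dec_nonneg y none)

lemma Pera_lb (W : X → Y → ℝ) (hW0 : ∀ x y, 0 ≤ W x y) {δ : ℝ} (hδpos : 0 < δ)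
    (hδ : ∀ x x' : X, ∃ y, δ ≤ W x y ∧ δ ≤ W x' y)
    {M n : ℕ} (c : FBCode X Y M n 1) (hM : 2 ≤ M) (hPerr : Perr W c = 0) :
    δ ^ n / M ≤ Pera W c := by
  have hm12 : (0:ℕ) < M ∧ 1 < M := ⟨by omega, by omega⟩
  set m1 : Fin M := ⟨0, hm12.1⟩ with hm1
  set m2 : Fin M := ⟨1, hm12.2⟩ with hm2
  obtain ⟨y, hy⟩ := exists_common_y W δ hδ n (c.enc m1) (c.enc m2)
  have h1 : δ ^ n ≤ outProb W c m1 y := by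
    have := Finset.prod_le_prod (s := Finset.univ)
      (f := fun _ : Fin n => δ)
      (g := fun t => W (c.enc m1 t (fun i => y ⟨i.1, lt_trans i.2 t.2⟩)) (y t))
      (fun _ _ => le_of_lt hδpos) (fun t _ => (hy t).1)
    rwa [Finset.prod_const, Finset.card_univ, Fintype.card_fin] at this
  have h2 : δ ^ n ≤ outProb W c m2 y := by
    have := Finset.prod_le_prod (s := Finset.univ)
      (f := fun _ : Fin n => δ)
      (g := fun t => W (c.enc m2 t (fun i => y ⟨i.1, lt_trans i.2 t.2⟩)) (y t))
      (fun _ _ => le_of_lt hδpos) (fun t _ => (hy t).2)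
    rwa [Finset.prod_const, Finset.card_univ, Fintype.card_fin] at this
  have hδn : (0:ℝ) < δ ^ n := pow_pos hδpos n
  have hpos1 : 0 < outProb W c m1 y := lt_of_lt_of_le hδn h1
  have hpos2 : 0 < outProb W c m2 y := lt_of_lt_of_le hδn h2
  have hz : ∀ S : Finset (Fin M), c.dec y (some S) = 0 := by
    intro S
    by_contra hS
    have hcard := c.dec_size y S hS
    have hmiss : m1 ∉ S ∨ m2 ∉ S := by
      by_contra hc
      push_neg at hc
      have hsub : ({m1, m2} : Finset (Fin M)) ⊆ S := by
        intro a ha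
        rcases Finset.mem_insert.mp ha with rfl | ha
        · exact hc.1
        · rw [Finset.mem_singleton.mp ha]; exact hc.2
      have hne12 : m1 ≠ m2 := by
        simp [hm1, hm2, Fin.ext_iff]
      have := Finset.card_le_card hsub
      rw [Finset.card_pair hne12] at this
      omega
    rcases hmiss with h | h
    · exact hS (dec_eq_zero_of_errorfree W hW0 c hPerr hpos1 h)
    · exact hS (dec_eq_zero_of_errorfree W hW0 c hPerr hpos2 h)
  have hnone : c.dec y none = 1 := by
    have := dec_none_sum c y
    rw [Finset.sum_eq_zero (fun S _ => hz S)] at this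
    linarith
  have hinner_nn : ∀ m' : Fin M, 0 ≤ ∑ y' : Fin n → Y, outProb W c m' y' * c.dec y' none :=
    fun m' => Finset.sum_nonneg fun y' _ =>
      mul_nonneg (outProb_nonneg W hW0 c m' y') (c.dec_nonneg y' none)
  have hterm : δ ^ n ≤ ∑ y' : Fin n → Y, outProb W c m1 y' * c.dec y' none := by
    have hle := Finset.single_le_sum
      (f := fun y' => outProb W c m1 y' * c.dec y' none)
      (fun y' _ => mul_nonneg (outProb_nonneg W hW0 c m1 y') (c.dec_nonneg y' none))
      (Finset.mem_univ y)
    rw [hnone, mul_one] at hle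
    exact le_trans h1 hle
  have houter : δ ^ n ≤ ∑ m : Fin M, ∑ y' : Fin n → Y, outProb W c m y' * c.dec y' none := by
    have hle := Finset.single_le_sum
      (f := fun m => ∑ y' : Fin n → Y, outProb W c m y' * c.dec y' none)
      (fun m _ => hinner_nn m) (Finset.mem_univ m1)
    exact le_trans hterm hle
  rw [Pera, div_eq_mul_inv, mul_comm]
  exact mul_le_mul_of_nonneg_left houter (by positivity)

noncomputable def eraseCode (X Y : Type) [Fintype X] [Fintype Y] [Nonempty X] (M n L : ℕ) :
    FBCode X Y M n L where
  enc _ _ _ := Classical.arbitrary X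
  dec _ o := if o = none then 1 else 0
  dec_nonneg := by intro y o; split <;> norm_num
  dec_sum := by intro y; rw [Fintype.sum_option]; simp
  dec_size := by intro y S h; simp at h

lemma eraseCode_Perr [Nonempty X] (W : X → Y → ℝ) (M n L : ℕ) :
    Perr W (eraseCode X Y M n L) = 0 := by
  rw [Perr]
  rw [Finset.sum_eq_zero]
  · ring
  intro m _
  rw [Finset.sum_eq_zero]
  intro y _
  rw [Finset.sum_eq_zero, mul_zero]
  intro S _
  simp [eraseCode]

lemma eraseCode_Pera [Nonempty X] [Nonempty Y] (W : X → Y → ℝ)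
    (hW1 : ∀ x, ∑ y, W x y = 1) (M n L : ℕ) (hM : 1 ≤ M) :
    Pera W (eraseCode X Y M n L) = 1 := by
  rw [Pera]
  have : ∀ m : Fin M, ∑ y : Fin n → Y, outProb W (eraseCode X Y M n L) m y *
      (eraseCode X Y M n L).dec y none = 1 := by
    intro m
    have h1 : ∀ y : Fin n → Y, outProb W (eraseCode X Y M n L) m y *
        (eraseCode X Y M n L).dec y none = outProb W (eraseCode X Y M n L) m y := by
      intro y; simp [eraseCode]
    rw [Finset.sum_congr rfl (fun y _ => h1 y)]
    exact sum_outProb W hW1 _ m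
  rw [Finset.sum_congr rfl (fun m _ => this m), Finset.sum_const, Finset.card_univ,
    Fintype.card_fin, nsmul_eq_mul, mul_one]
  rw [inv_mul_cancel₀]
  exact Nat.cast_ne_zero.mpr (by omega)

lemma PeraMin_bddBelow (W : X → Y → ℝ) (hW0 : ∀ x y, 0 ≤ W x y) (M n L : ℕ) :
    BddBelow {r | ∃ c : FBCode X Y M n L, Perr W c = 0 ∧ Pera W c = r} := by
  refine ⟨0, ?_⟩
  rintro r ⟨c, _, rfl⟩
  exact Pera_nonneg W hW0 c

lemma PeraMin_le_one [Nonempty X] (W : X → Y → ℝ) (hW0 : ∀ x y, 0 ≤ W x y)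
    (hW1 : ∀ x, ∑ y, W x y = 1) (M n : ℕ) (hM : 1 ≤ M) : PeraMin W M n 1 ≤ 1 := by
  have : Nonempty Y := nonempty_Y W hW1
  apply csInf_le (PeraMin_bddBelow W hW0 M n 1)
  exact ⟨eraseCode X Y M n 1, eraseCode_Perr W M n 1, eraseCode_Pera W hW1 M n 1 hM⟩

lemma PeraMin_lb [Nonempty X] (W : X → Y → ℝ) (hW0 : ∀ x y, 0 ≤ W x y)
    (hW1 : ∀ x, ∑ y, W x y = 1) {δ : ℝ} (hδpos : 0 < δ)
    (hδ : ∀ x x' : X, ∃ y, δ ≤ W x y ∧ δ ≤ W x' y) (M n : ℕ) (hM : 2 ≤ M) :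
    δ ^ n / M ≤ PeraMin W M n 1 := by
  have : Nonempty Y := nonempty_Y W hW1
  apply le_csInf
  · exact ⟨1, eraseCode X Y M n 1, eraseCode_Perr W M n 1,
      eraseCode_Pera W hW1 M n 1 (by omega)⟩
  · rintro r ⟨c, hc0, rfl⟩
    exact Pera_lb W hW0 hδpos hδ c hM hc0

end Greedy
section Restrict

open Finset FBCode

variable {X Y : Type} [Fintype X] [Fintype Y]

/-- Restriction of an error-free `M`-message code to two messages. -/
noncomputable def restrict2 {M n : ℕ} (c : FBCode X Y M n 1) (m1 m2 : Fin M)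
    (hne : m1 ≠ m2) : FBCode X Y 2 n 1 where
  enc b := c.enc (if b = 0 then m1 else m2)
  dec y o := match o with
    | none => 1 - c.dec y (some {m1}) - c.dec y (some {m2})
    | some S => if S = {0} then c.dec y (some {m1})
        else if S = {1} then c.dec y (some {m2}) else 0
  dec_nonneg := by
    intro y o
    have hsub : ({({m1} : Finset (Fin M)), {m2}} : Finset (Finset (Fin M))) ⊆ Finset.univ :=
      Finset.subset_univ _
    have hpair : c.dec y (some {m1}) + c.dec y (some {m2})
        ≤ ∑ S : Finset (Fin M), c.dec y (some S) := by
      have h1 : ∑ S ∈ ({({m1} : Finset (Fin M)), {m2}} : Finset (Finset (Fin M))),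
          c.dec y (some S) ≤ ∑ S : Finset (Fin M), c.dec y (some S) :=
        Finset.sum_le_sum_of_subset_of_nonneg hsub (fun S _ _ => c.dec_nonneg y (some S))
      rwa [Finset.sum_pair (Finset.singleton_injective.ne hne)] at h1
    have htot := dec_none_sum c y
    have h0 := c.dec_nonneg y none
    match o with
    | none => show (0:ℝ) ≤ 1 - c.dec y (some {m1}) - c.dec y (some {m2}); linarith
    | some S =>
      show (0:ℝ) ≤ if S = {0} then c.dec y (some {m1})
        else if S = {1} then c.dec y (some {m2}) else 0
      split
      · exact c.dec_nonneg y _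
      split
      · exact c.dec_nonneg y _
      · exact le_refl 0
  dec_sum := by
    intro y
    rw [Fintype.sum_option]
    have hvan : ∀ S ∈ Finset.univ,
        S ∉ ({({0} : Finset (Fin 2)), {1}} : Finset (Finset (Fin 2))) →
        (if S = {0} then c.dec y (some {m1})
          else if S = {1} then c.dec y (some {m2}) else 0) = 0 := by
      intro S _ hS
      simp only [Finset.mem_insert, Finset.mem_singleton] at hS
      push_neg at hS
      simp [hS.1, hS.2]
    rw [← Finset.sum_subset (Finset.subset_univ _) hvan,
      Finset.sum_pair (by decide : ({0} : Finset (Fin 2)) ≠ {1})]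
    have h01 : ({0} : Finset (Fin 2)) ≠ {1} := by decide
    show (1 - c.dec y (some {m1}) - c.dec y (some {m2})) +
      ((if ({0} : Finset (Fin 2)) = {0} then c.dec y (some {m1})
        else if ({0} : Finset (Fin 2)) = {1} then c.dec y (some {m2}) else 0) +
       (if ({1} : Finset (Fin 2)) = {0} then c.dec y (some {m1})
        else if ({1} : Finset (Fin 2)) = {1} then c.dec y (some {m2}) else 0)) = 1
    rw [if_pos rfl, if_neg h01.symm, if_pos rfl]
    ring
  dec_size := by
    intro y S h
    dsimp only at h
    by_cases h0 : S = {0}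
    · subst h0; simp
    by_cases h1 : S = {1}
    · subst h1; simp
    · rw [if_neg h0, if_neg h1] at h; exact absurd rfl h

lemma restrict2_outProb (W : X → Y → ℝ) {M n : ℕ} (c : FBCode X Y M n 1) (m1 m2 : Fin M)
    (hne : m1 ≠ m2) (b : Fin 2) (y : Fin n → Y) :
    outProb W (restrict2 c m1 m2 hne) b y = outProb W c (if b = 0 then m1 else m2) y := rfl

lemma restrict2_Perr (W : X → Y → ℝ) (hW0 : ∀ x y, 0 ≤ W x y) {M n : ℕ}
    (c : FBCode X Y M n 1) (m1 m2 : Fin M) (hne : m1 ≠ m2) (hPerr : Perr W c = 0) :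
    Perr W (restrict2 c m1 m2 hne) = 0 := by
  rw [Perr]
  rw [Finset.sum_eq_zero, mul_zero]
  intro b _
  rw [Finset.sum_eq_zero]
  intro y _
  by_cases h0 : outProb W (restrict2 c m1 m2 hne) b y = 0
  · rw [h0, zero_mul]
  · have hpos : 0 < outProb W c (if b = 0 then m1 else m2) y := by
      rw [restrict2_outProb] at h0
      exact lt_of_le_of_ne (outProb_nonneg W hW0 c _ y) (Ne.symm h0)
    rw [Finset.sum_eq_zero, mul_zero]
    intro S _
    by_cases hbS : b ∈ S
    · rw [if_pos hbS]
    rw [if_neg hbS]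
    show (if S = {0} then c.dec y (some {m1}) else if S = {1} then c.dec y (some {m2}) else 0) = 0
    by_cases hS0 : S = {0}
    · subst hS0
      have hb1 : b = 1 := by
        have hb0 : b ≠ 0 := fun h => hbS (by rw [h]; exact Finset.mem_singleton_self 0)
        fin_cases b
        · exact absurd rfl hb0
        · rfl
      subst hb1
      have : (if (1 : Fin 2) = 0 then m1 else m2) = m2 := by norm_num
      rw [this] at hpos
      rw [if_pos rfl]
      exact dec_eq_zero_of_errorfree W hW0 c hPerr hpos (by simp [Ne.symm hne])
    by_cases hS1 : S = {1}
    · subst hS1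
      have hb0 : b = 0 := by
        have hb1' : b ≠ 1 := fun h => hbS (by rw [h]; exact Finset.mem_singleton_self 1)
        fin_cases b
        · rfl
        · exact absurd rfl hb1'
      subst hb0
      rw [if_pos rfl] at hpos
      rw [if_neg hS0, if_pos rfl]
      exact dec_eq_zero_of_errorfree W hW0 c hPerr hpos (by simp [hne])
    · rw [if_neg hS0, if_neg hS1]

lemma restrict2_Pera (W : X → Y → ℝ) (hW0 : ∀ x y, 0 ≤ W x y) {M n : ℕ}
    (c : FBCode X Y M n 1) (m1 m2 : Fin M) (hne : m1 ≠ m2) (hPerr : Perr W c = 0) :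
    Pera W (restrict2 c m1 m2 hne) =
      2⁻¹ * ((∑ y : Fin n → Y, outProb W c m1 y * c.dec y none)
        + (∑ y : Fin n → Y, outProb W c m2 y * c.dec y none)) := by
  rw [Pera]
  have key : ∀ (b : Fin 2) (y : Fin n → Y),
      outProb W (restrict2 c m1 m2 hne) b y * (restrict2 c m1 m2 hne).dec y none
      = outProb W c (if b = 0 then m1 else m2) y * c.dec y none := by
    intro b y
    by_cases h0 : outProb W c (if b = 0 then m1 else m2) y = 0
    · rw [restrict2_outProb, h0, zero_mul, zero_mul]
    have hpos : 0 < outProb W c (if b = 0 then m1 else m2) y :=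
      lt_of_le_of_ne (outProb_nonneg W hW0 c _ y) (Ne.symm h0)
    have hdecnone : (restrict2 c m1 m2 hne).dec y none = c.dec y none := by
      show 1 - c.dec y (some {m1}) - c.dec y (some {m2}) = c.dec y none
      have htot := dec_none_sum c y
      have hvan : ∀ S ∈ Finset.univ,
          S ∉ ({({m1} : Finset (Fin M)), {m2}} : Finset (Finset (Fin M))) →
          c.dec y (some S) = 0 := by
        intro S _ hS
        simp only [Finset.mem_insert, Finset.mem_singleton] at hS
        push_neg at hS
        by_cases hmem : (if b = 0 then m1 else m2) ∈ S
        · by_contra hdec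
          have hcard := c.dec_size y S hdec
          have : S = {if b = 0 then m1 else m2} := by
            apply Finset.eq_singleton_iff_unique_mem.mpr
            refine ⟨hmem, fun x hx => ?_⟩
            by_contra hxne
            have h2 : 1 < S.card := Finset.one_lt_card.mpr
              ⟨x, hx, _, hmem, hxne⟩
            omega
          rcases (by split <;> simp : (if b = 0 then m1 else m2) = m1 ∨
            (if b = 0 then m1 else m2) = m2) with he | he <;> rw [he] at this
          · exact hS.1 this
          · exact hS.2 this
        · exact dec_eq_zero_of_errorfree W hW0 c hPerr hpos hmem
      have hsum : ∑ S : Finset (Fin M), c.dec y (some S)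
          = c.dec y (some {m1}) + c.dec y (some {m2}) := by
        rw [← Finset.sum_subset (Finset.subset_univ _) hvan,
          Finset.sum_pair (Finset.singleton_injective.ne hne)]
      linarith
    rw [restrict2_outProb, hdecnone]
  have hsum : ∀ b : Fin 2, ∑ y : Fin n → Y,
      outProb W (restrict2 c m1 m2 hne) b y * (restrict2 c m1 m2 hne).dec y none
      = ∑ y : Fin n → Y, outProb W c (if b = 0 then m1 else m2) y * c.dec y none :=
    fun b => Finset.sum_congr rfl (fun y _ => key b y)
  rw [Fin.sum_univ_two, hsum 0, hsum 1]
  norm_num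

lemma PeraMin2_le_Pera [Nonempty X] (W : X → Y → ℝ) (hW0 : ∀ x y, 0 ≤ W x y)
    {M n : ℕ} (c : FBCode X Y M n 1) (hM : 2 ≤ M) (hPerr : Perr W c = 0) :
    PeraMin W 2 n 1 ≤ Pera W c := by
  classical
  set A : Fin M → ℝ := fun m => ∑ y : Fin n → Y, outProb W c m y * c.dec y none with hA
  have hAnn : ∀ m, 0 ≤ A m := fun m => Finset.sum_nonneg fun y _ =>
    mul_nonneg (outProb_nonneg W hW0 c m y) (c.dec_nonneg y none)
  have huniv_ne : (Finset.univ : Finset (Fin M)).Nonempty := by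
    refine ⟨⟨0, by omega⟩, Finset.mem_univ _⟩
  obtain ⟨m1, _, hm1min⟩ := Finset.exists_min_image Finset.univ A huniv_ne
  have herase_ne : (Finset.univ.erase m1).Nonempty := by
    rw [← Finset.card_pos, Finset.card_erase_of_mem (Finset.mem_univ m1),
      Finset.card_univ, Fintype.card_fin]
    omega
  obtain ⟨m2, hm2mem, hm2min⟩ := Finset.exists_min_image (Finset.univ.erase m1) A herase_ne
  have hne : m1 ≠ m2 := (Finset.ne_of_mem_erase hm2mem).symm
  have hab : A m1 ≤ A m2 := hm1min m2 (Finset.mem_univ m2)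
  -- sum lower bound
  have hsplit1 : ∑ m, A m = A m1 + ∑ m ∈ Finset.univ.erase m1, A m :=
    (Finset.add_sum_erase Finset.univ A (Finset.mem_univ m1)).symm
  have hsplit2 : ∑ m ∈ Finset.univ.erase m1, A m
      = A m2 + ∑ m ∈ (Finset.univ.erase m1).erase m2, A m :=
    (Finset.add_sum_erase _ A hm2mem).symm
  have hcard : ((Finset.univ.erase m1).erase m2).card = M - 2 := by
    rw [Finset.card_erase_of_mem hm2mem, Finset.card_erase_of_mem (Finset.mem_univ m1),
      Finset.card_univ, Fintype.card_fin]
    omega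
  have hrest : ((M:ℝ) - 2) * A m2 ≤ ∑ m ∈ (Finset.univ.erase m1).erase m2, A m := by
    have := Finset.card_nsmul_le_sum ((Finset.univ.erase m1).erase m2) A (A m2)
      (fun x hx => hm2min x (Finset.mem_of_mem_erase hx))
    rw [hcard, nsmul_eq_mul] at this
    have hcast : ((M - 2 : ℕ) : ℝ) = (M:ℝ) - 2 := by
      push_cast [Nat.cast_sub (by omega : 2 ≤ M)]
      ring
    rwa [hcast] at this
  have hS : A m1 + A m2 + ((M:ℝ) - 2) * A m2 ≤ ∑ m, A m := by
    rw [hsplit1, hsplit2]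
    linarith
  have hMpos : (0:ℝ) < M := by exact_mod_cast (by omega : 0 < M)
  have hM2 : (2:ℝ) ≤ (M:ℝ) := by exact_mod_cast hM
  have hPera : Pera W c = (M:ℝ)⁻¹ * ∑ m, A m := rfl
  have hhalf : (A m1 + A m2) / 2 ≤ Pera W c := by
    rw [hPera, inv_mul_eq_div, div_le_div_iff₀ (by norm_num : (0:ℝ) < 2) hMpos]
    nlinarith [hS, hab, mul_le_mul_of_nonneg_right hab (by linarith : (0:ℝ) ≤ (M:ℝ) - 2)]
  calc PeraMin W 2 n 1 ≤ Pera W (restrict2 c m1 m2 hne) :=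
        csInf_le (PeraMin_bddBelow W hW0 2 n 1)
          ⟨restrict2 c m1 m2 hne, restrict2_Perr W hW0 c m1 m2 hne hPerr, rfl⟩
    _ = 2⁻¹ * (A m1 + A m2) := restrict2_Pera W hW0 c m1 m2 hne hPerr
    _ ≤ Pera W c := by linarith [hhalf]

end Restrict
section Composite

open Finset FBCode
open scoped Classical

variable {X Y : Type} [Fintype X] [Fintype Y]

/-- a length-`ℓ` output block is "successful" if exactly one of the two messages
could have produced it. -/
noncomputable def succSlot {ℓ : ℕ} (W : X → Y → ℝ) (c2 : FBCode X Y 2 ℓ 1)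
    (z : Fin ℓ → Y) : Prop :=
  Xor' (0 < outProb W c2 0 z) (0 < outProb W c2 1 z)

/-- decoded bit of a slot output. -/
noncomputable def sdec {ℓ : ℕ} (W : X → Y → ℝ) (c2 : FBCode X Y 2 ℓ 1)
    (z : Fin ℓ → Y) : Fin 2 :=
  if 0 < outProb W c2 0 z then 0 else 1

/-- number of successful slots among the first `s` slots. -/
noncomputable def cnt {ℓ : ℕ} (W : X → Y → ℝ) (c2 : FBCode X Y 2 ℓ 1) {q : ℕ}
    (z : Fin q → (Fin ℓ → Y)) (s : ℕ) : ℕ :=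
  (Finset.univ.filter (fun j : Fin q => j.1 < s ∧ succSlot W c2 (z j))).card

/-- bit `i` of message `m`. -/
noncomputable def bitOf (r : ℕ) (m : Fin (2^r)) (i : ℕ) : Fin 2 :=
  if hi : i < r then (finFunctionFinEquiv.symm m) ⟨i, hi⟩ else 0

lemma slot_time_lt {ℓ n : ℕ} (s : Fin (n/ℓ)) {u : ℕ} (hu : u < ℓ) : s.1 * ℓ + u < n := by
  have h1 : (s.1+1)*ℓ ≤ (n/ℓ)*ℓ := Nat.mul_le_mul_right ℓ s.2
  have h2 : (n/ℓ)*ℓ ≤ n := Nat.div_mul_le_self n ℓ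
  have h3 : s.1*ℓ + u < (s.1+1)*ℓ := by
    rw [Nat.succ_mul]
    exact Nat.add_lt_add_left hu _
  omega

lemma slot_time_lt' {ℓ n : ℕ} (s : Fin (n/ℓ)) {u : ℕ} (hu : u < ℓ) :
    s.1 * ℓ + u < (n/ℓ) * ℓ := by
  have h1 : (s.1+1)*ℓ ≤ (n/ℓ)*ℓ := Nat.mul_le_mul_right ℓ s.2
  have h3 : s.1*ℓ + u < (s.1+1)*ℓ := by
    rw [Nat.succ_mul]
    exact Nat.add_lt_add_left hu _
  omega

lemma slot_div {ℓ : ℕ} (hℓ : 0 < ℓ) (s u : ℕ) (hu : u < ℓ) : (s * ℓ + u) / ℓ = s := by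
  rw [add_comm, Nat.add_mul_div_right _ _ hℓ, Nat.div_eq_of_lt hu, zero_add]

lemma slot_mod {ℓ : ℕ} (s u : ℕ) (hu : u < ℓ) : (s * ℓ + u) % ℓ = u := by
  rw [add_comm, Nat.add_mul_mod_self_right, Nat.mod_eq_of_lt hu]

/-- extraction of the slot outputs from a full output sequence. -/
noncomputable def slotsOf {ℓ : ℕ} (n : ℕ) (y : Fin n → Y) : Fin (n/ℓ) → (Fin ℓ → Y) :=
  fun s u => y ⟨s.1*ℓ+u.1, slot_time_lt s u.2⟩

/-- the split of output sequences into slot outputs and a remainder. -/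
noncomputable def splitEquiv (ℓ n : ℕ) (hℓ : 0 < ℓ) :
    ((Fin (n/ℓ) → (Fin ℓ → Y)) × (Fin (n - (n/ℓ)*ℓ) → Y)) ≃ (Fin n → Y) where
  toFun p t := if ht : t.1 < (n/ℓ)*ℓ then
      p.1 ⟨t.1/ℓ, (Nat.div_lt_iff_lt_mul hℓ).mpr ht⟩ ⟨t.1 % ℓ, Nat.mod_lt _ hℓ⟩
    else p.2 ⟨t.1 - (n/ℓ)*ℓ, by have := t.2; omega⟩
  invFun y := (slotsOf n y, fun w => y ⟨(n/ℓ)*ℓ + w.1,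
    by have h2 : (n/ℓ)*ℓ ≤ n := Nat.div_mul_le_self n ℓ; have := w.2; omega⟩)
  left_inv := by
    intro p
    apply Prod.ext
    · funext s u
      dsimp only [slotsOf]
      rw [dif_pos (slot_time_lt' s u.2)]
      have e1 : (⟨(s.1*ℓ+u.1)/ℓ, (Nat.div_lt_iff_lt_mul hℓ).mpr (slot_time_lt' s u.2)⟩ :
          Fin (n/ℓ)) = s := Fin.ext (slot_div hℓ s.1 u.1 u.2)
      have e2 : (⟨(s.1*ℓ+u.1)%ℓ, Nat.mod_lt _ hℓ⟩ : Fin ℓ) = u := Fin.ext (slot_mod s.1 u.1 u.2)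
      rw [e1, e2]
    · funext w
      dsimp only
      rw [dif_neg (by omega)]
      exact congrArg p.2 (Fin.ext (show ((n/ℓ)*ℓ + w.1) - (n/ℓ)*ℓ = w.1 by omega))
  right_inv := by
    intro y
    funext t
    dsimp only [slotsOf]
    by_cases ht : t.1 < (n/ℓ)*ℓ

    · rw [dif_pos ht]
      exact congrArg y (Fin.ext (by
        show t.1/ℓ * ℓ + t.1 % ℓ = t.1
        rw [mul_comm]
        exact Nat.div_add_mod t.1 ℓ))
    · rw [dif_neg ht]
      exact congrArg y (Fin.ext (by
        show (n/ℓ)*ℓ + (t.1 - (n/ℓ)*ℓ) = t.1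
        omega))

lemma splitEquiv_fst {ℓ n : ℕ} (hℓ : 0 < ℓ) (z : Fin (n/ℓ) → (Fin ℓ → Y))
    (w : Fin (n - (n/ℓ)*ℓ) → Y) :
    slotsOf (ℓ := ℓ) n ((splitEquiv ℓ n hℓ) (z, w)) = z :=
  congrArg Prod.fst ((splitEquiv ℓ n hℓ).left_inv (z, w))

lemma splitEquiv_lo {ℓ n : ℕ} (hℓ : 0 < ℓ) (z : Fin (n/ℓ) → (Fin ℓ → Y))
    (w : Fin (n - (n/ℓ)*ℓ) → Y) (s : Fin (n/ℓ)) {u : ℕ} (hu : u < ℓ) (h : s.1*ℓ+u < n) :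
    (splitEquiv ℓ n hℓ) (z, w) ⟨s.1*ℓ+u, h⟩ = z s ⟨u, hu⟩ := by
  have := congrFun (congrFun (splitEquiv_fst hℓ z w) s) ⟨u, hu⟩
  dsimp only [slotsOf] at this
  exact this

lemma splitEquiv_hi {ℓ n : ℕ} (hℓ : 0 < ℓ) (z : Fin (n/ℓ) → (Fin ℓ → Y))
    (w : Fin (n - (n/ℓ)*ℓ) → Y) (w' : Fin (n - (n/ℓ)*ℓ)) (h : (n/ℓ)*ℓ + w'.1 < n) :
    (splitEquiv ℓ n hℓ) (z, w) ⟨(n/ℓ)*ℓ + w'.1, h⟩ = w w' := by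
  show (if ht : (n/ℓ)*ℓ + w'.1 < (n/ℓ)*ℓ then _ else _) = w w'
  rw [dif_neg (by omega)]
  exact congrArg w (Fin.ext (show ((n/ℓ)*ℓ + w'.1) - (n/ℓ)*ℓ = w'.1 by omega))

/-- splitting of the time axis. -/
noncomputable def timeEquiv (ℓ n : ℕ) (hℓ : 0 < ℓ) :
    ((Fin (n/ℓ) × Fin ℓ) ⊕ Fin (n - (n/ℓ)*ℓ)) ≃ Fin n where
  toFun := Sum.elim (fun p => ⟨p.1.1*ℓ+p.2.1, slot_time_lt p.1 p.2.2⟩)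
    (fun w => ⟨(n/ℓ)*ℓ + w.1,
      by have h2 : (n/ℓ)*ℓ ≤ n := Nat.div_mul_le_self n ℓ; have := w.2; omega⟩)
  invFun t := if ht : t.1 < (n/ℓ)*ℓ then
      Sum.inl (⟨t.1/ℓ, (Nat.div_lt_iff_lt_mul hℓ).mpr ht⟩, ⟨t.1 % ℓ, Nat.mod_lt _ hℓ⟩)
    else Sum.inr ⟨t.1 - (n/ℓ)*ℓ, by have := t.2; omega⟩
  left_inv := by
    rintro (⟨s, u⟩ | w)
    · dsimp only [Sum.elim_inl]

      rw [dif_pos (slot_time_lt' s u.2)]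
      congr 1
      apply Prod.ext
      · exact Fin.ext (slot_div hℓ s.1 u.1 u.2)
      · exact Fin.ext (slot_mod s.1 u.1 u.2)
    · dsimp only [Sum.elim_inr]
      rw [dif_neg (by omega)]
      exact congrArg Sum.inr (Fin.ext (show ((n/ℓ)*ℓ + w.1) - (n/ℓ)*ℓ = w.1 by omega))
  right_inv := by
    intro t
    dsimp only
    by_cases ht : t.1 < (n/ℓ)*ℓ
    · rw [dif_pos ht]
      dsimp only [Sum.elim_inl]
      exact Fin.ext (by
        show t.1/ℓ * ℓ + t.1 % ℓ = t.1
        rw [mul_comm]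
        exact Nat.div_add_mod t.1 ℓ)
    · rw [dif_neg ht]
      dsimp only [Sum.elim_inr]
      exact Fin.ext (by
        show (n/ℓ)*ℓ + (t.1 - (n/ℓ)*ℓ) = t.1
        omega)

lemma cnt_congr {ℓ : ℕ} (W : X → Y → ℝ) (c2 : FBCode X Y 2 ℓ 1) {q : ℕ}
    (z1 z2 : Fin q → (Fin ℓ → Y)) (s : ℕ) (h : ∀ j : Fin q, j.1 < s → z1 j = z2 j) :
    cnt W c2 z1 s = cnt W c2 z2 s := by
  unfold cnt
  congr 1
  apply Finset.filter_congr
  intro j _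
  by_cases hj : j.1 < s
  · rw [h j hj]
  · simp [hj]

lemma cnt_mono {ℓ : ℕ} (W : X → Y → ℝ) (c2 : FBCode X Y 2 ℓ 1) {q : ℕ}
    (z : Fin q → (Fin ℓ → Y)) {s s' : ℕ} (h : s ≤ s') : cnt W c2 z s ≤ cnt W c2 z s' := by
  apply Finset.card_le_card
  apply Finset.monotone_filter_right
  intro j _ hj
  exact ⟨lt_of_lt_of_le hj.1 h, hj.2⟩

lemma cnt_stable {ℓ : ℕ} (W : X → Y → ℝ) (c2 : FBCode X Y 2 ℓ 1) {q : ℕ}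
    (z : Fin q → (Fin ℓ → Y)) {s : ℕ} (h : q ≤ s) : cnt W c2 z s = cnt W c2 z q := by
  unfold cnt
  congr 1
  apply Finset.filter_congr
  intro j _
  have := j.2
  simp only [iff_iff_eq]
  congr 1
  · simp only [eq_iff_iff]
    constructor <;> intro <;> omega

lemma cnt_zero {ℓ : ℕ} (W : X → Y → ℝ) (c2 : FBCode X Y 2 ℓ 1) {q : ℕ}
    (z : Fin q → (Fin ℓ → Y)) : cnt W c2 z 0 = 0 := by
  simp [cnt]

lemma cnt_succ {ℓ : ℕ} (W : X → Y → ℝ) (c2 : FBCode X Y 2 ℓ 1) {q : ℕ}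
    (z : Fin q → (Fin ℓ → Y)) {s : ℕ} (hs : s < q) :
    cnt W c2 z (s+1) = cnt W c2 z s + (if succSlot W c2 (z ⟨s, hs⟩) then 1 else 0) := by
  unfold cnt
  rw [Finset.card_filter, Finset.card_filter]
  have key : ∀ j : Fin q, (if (j.1 < s+1 ∧ succSlot W c2 (z j)) then (1:ℕ) else 0)
      = (if (j.1 < s ∧ succSlot W c2 (z j)) then 1 else 0)
        + (if (j = ⟨s, hs⟩ ∧ succSlot W c2 (z j)) then 1 else 0) := by
    intro j
    by_cases hsucc : succSlot W c2 (z j)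
    · simp only [hsucc, and_true, Fin.ext_iff]
      split_ifs <;> omega
    · simp [hsucc]
  rw [Finset.sum_congr rfl (fun j _ => key j), Finset.sum_add_distrib]
  congr 1
  rw [Finset.sum_eq_single (⟨s, hs⟩ : Fin q)]
  · simp
  · intro j _ hj
    simp [hj]
  · intro habs
    exact absurd (Finset.mem_univ _) habs

lemma cnt_exists {ℓ : ℕ} (W : X → Y → ℝ) (c2 : FBCode X Y 2 ℓ 1) {q : ℕ}
    (z : Fin q → (Fin ℓ → Y)) (i : ℕ) (hi : i < cnt W c2 z q) :
    ∃ j : Fin q, succSlot W c2 (z j) ∧ cnt W c2 z j.1 = i := by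
  have hP : ∃ s, i < cnt W c2 z s := ⟨q, hi⟩
  have hs0 : i < cnt W c2 z (Nat.find hP) := Nat.find_spec hP
  have hs0pos : Nat.find hP ≠ 0 := by
    intro h
    rw [h, cnt_zero] at hs0
    omega
  obtain ⟨s', hs'⟩ : ∃ s', Nat.find hP = s'+1 := ⟨Nat.find hP - 1, by omega⟩
  have hlt : ¬ i < cnt W c2 z s' := Nat.find_min hP (by omega)
  have hs'q : s' < q := by
    by_contra h
    push_neg at h
    rw [cnt_stable W c2 z h] at hlt
    exact hlt hi
  have hstep := cnt_succ W c2 z hs'q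
  rw [hs'] at hs0
  by_cases hsucc : succSlot W c2 (z ⟨s', hs'q⟩)
  · refine ⟨⟨s', hs'q⟩, hsucc, ?_⟩
    rw [if_pos hsucc] at hstep
    show cnt W c2 z s' = i
    omega
  · rw [if_neg hsucc, add_zero] at hstep
    omega

/-- the slot outputs visible in a history of length `t`. -/
noncomputable def prevz {ℓ : ℕ} (n : ℕ) (y0 : Y) {t : ℕ} (h : Fin t → Y) :
    Fin (n/ℓ) → (Fin ℓ → Y) :=
  fun j u => if hj : j.1*ℓ+u.1 < t then h ⟨j.1*ℓ+u.1, hj⟩ else y0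

/-- decoded bit `i` from the slot outputs. -/
noncomputable def decBits {ℓ : ℕ} (W : X → Y → ℝ) (c2 : FBCode X Y 2 ℓ 1) {q : ℕ}
    (z : Fin q → (Fin ℓ → Y)) (i : ℕ) : Fin 2 :=
  if h : ∃ j : Fin q, succSlot W c2 (z j) ∧ cnt W c2 z j.1 = i then
    sdec W c2 (z h.choose) else 0

/-- decoder output of the composite code. -/
noncomputable def Dout {ℓ : ℕ} (W : X → Y → ℝ) (c2 : FBCode X Y 2 ℓ 1) (n r : ℕ)
    (y : Fin n → Y) : Option (Finset (Fin (2^r))) :=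
  if r ≤ cnt W c2 (slotsOf (ℓ := ℓ) n y) (n/ℓ) then
    some {finFunctionFinEquiv (fun i : Fin r => decBits W c2 (slotsOf (ℓ := ℓ) n y) i.1)}
  else none

/-- The composite code: transmit the `r` bits of the message one by one, each by
one use of the two-message code `c2` in the next length-`ℓ` slot, moving to the
next bit as soon as a slot is unambiguous. -/
noncomputable def comp (W : X → Y → ℝ) {ℓ : ℕ} (hℓ : 0 < ℓ) (c2 : FBCode X Y 2 ℓ 1)
    (x0 : X) (y0 : Y) (n r : ℕ) : FBCode X Y (2^r) n 1 where
  enc m t h :=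
    if ht : t.1 < (n/ℓ)*ℓ then
      c2.enc (bitOf r m (cnt W c2 (prevz (ℓ := ℓ) n y0 h) (t.1/ℓ)))
        ⟨t.1 % ℓ, Nat.mod_lt _ hℓ⟩
        (fun i => h ⟨(t.1/ℓ)*ℓ + i.1, by
          have h1 : (t.1/ℓ)*ℓ + t.1 % ℓ = t.1 := by
            rw [mul_comm]; exact Nat.div_add_mod t.1 ℓ
          have h3 : i.1 < t.1 % ℓ := i.2
          omega⟩)
    else x0
  dec y o := if o = Dout W c2 n r y then 1 else 0
  dec_nonneg := by intro y o; split <;> norm_num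
  dec_sum := by
    intro y
    rw [Finset.sum_ite_eq' Finset.univ (Dout W c2 n r y) (fun _ => (1:ℝ))]
    simp
  dec_size := by
    intro y S h
    have hS : some S = Dout W c2 n r y := by
      by_contra h'
      exact h (if_neg h')
    by_cases hcond : r ≤ cnt W c2 (slotsOf (ℓ := ℓ) n y) (n/ℓ)
    · rw [Dout, if_pos hcond] at hS
      have : S = {finFunctionFinEquiv (fun i : Fin r => decBits W c2 (slotsOf (ℓ := ℓ) n y) i.1)} :=
        Option.some_injective _ hS
      rw [this, Finset.card_singleton]
    · rw [Dout, if_neg hcond] at hS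
      simp at hS

lemma comp_enc (W : X → Y → ℝ) {ℓ : ℕ} (hℓ : 0 < ℓ) (c2 : FBCode X Y 2 ℓ 1)
    (x0 : X) (y0 : Y) (n r : ℕ) (m : Fin (2^r)) (t : Fin n) (h : Fin t.1 → Y) :
    (comp W hℓ c2 x0 y0 n r).enc m t h = (if ht : t.1 < (n/ℓ)*ℓ then
      c2.enc (bitOf r m (cnt W c2 (prevz (ℓ := ℓ) n y0 h) (t.1/ℓ)))
        ⟨t.1 % ℓ, Nat.mod_lt _ hℓ⟩
        (fun i => h ⟨(t.1/ℓ)*ℓ + i.1, by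
          have h1 : (t.1/ℓ)*ℓ + t.1 % ℓ = t.1 := by
            rw [mul_comm]; exact Nat.div_add_mod t.1 ℓ
          have h3 : i.1 < t.1 % ℓ := i.2
          omega⟩)
    else x0) := rfl

lemma comp_dec (W : X → Y → ℝ) {ℓ : ℕ} (hℓ : 0 < ℓ) (c2 : FBCode X Y 2 ℓ 1)
    (x0 : X) (y0 : Y) (n r : ℕ) (y : Fin n → Y) (o : Option (Finset (Fin (2^r)))) :
    (comp W hℓ c2 x0 y0 n r).dec y o = if o = Dout W c2 n r y then 1 else 0 := rfl

lemma enc2_congr {ℓ : ℕ} (c2 : FBCode X Y 2 ℓ 1) {b b' : Fin 2} {u u' : Fin ℓ}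
    (g : Fin u.1 → Y) (g' : Fin u'.1 → Y) (hb : b = b') (hu : u = u')
    (hg : ∀ i : Fin u.1, g i = g' ⟨i.1, hu ▸ i.2⟩) :
    c2.enc b u g = c2.enc b' u' g' := by
  subst hb hu
  congr 1
  funext i
  exact hg i

lemma comp_outProb (W : X → Y → ℝ) {ℓ : ℕ} (hℓ : 0 < ℓ) (c2 : FBCode X Y 2 ℓ 1)
    (x0 : X) (y0 : Y) (n r : ℕ) (m : Fin (2^r))
    (z : Fin (n/ℓ) → (Fin ℓ → Y)) (w : Fin (n - (n/ℓ)*ℓ) → Y) :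
    outProb W (comp W hℓ c2 x0 y0 n r) m ((splitEquiv ℓ n hℓ) (z, w)) =
      (∏ s : Fin (n/ℓ), outProb W c2 (bitOf r m (cnt W c2 z s.1)) (z s))
      * ∏ w' : Fin (n - (n/ℓ)*ℓ), W x0 (w w') := by
  set y : Fin n → Y := (splitEquiv ℓ n hℓ) (z, w) with hy
  rw [outProb]
  rw [← Equiv.prod_comp (timeEquiv ℓ n hℓ)
    (fun t => W ((comp W hℓ c2 x0 y0 n r).enc m t (fun i => y ⟨i.1, lt_trans i.2 t.2⟩)) (y t))]
  rw [Fintype.prod_sum_type]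
  congr 1
  · rw [Fintype.prod_prod_type]
    apply Finset.prod_congr rfl
    intro s _
    rw [outProb]
    apply Finset.prod_congr rfl
    intro u _
    have e1 : (s.1*ℓ+u.1)/ℓ = s.1 := slot_div hℓ s.1 u.1 u.2
    have e2 : (s.1*ℓ+u.1)%ℓ = u.1 := slot_mod s.1 u.1 u.2
    have hpf : s.1*ℓ+u.1 < n := slot_time_lt s u.2
    have hyt : y ⟨s.1*ℓ+u.1, hpf⟩ = z s u := splitEquiv_lo hℓ z w s u.2 hpf
    have hslot : ∀ (j : Fin (n/ℓ)), j.1 < s.1 →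
        prevz (ℓ := ℓ) n y0 (fun i : Fin (s.1*ℓ+u.1) => y ⟨i.1, lt_trans i.2 hpf⟩) j = z j := by
      intro j hj
      funext u'
      have hlt : j.1*ℓ+u'.1 < s.1*ℓ+u.1 := by
        have h1 : (j.1+1)*ℓ ≤ s.1*ℓ := Nat.mul_le_mul_right ℓ hj
        rw [Nat.succ_mul] at h1
        have := u'.2
        omega
      show (if hj' : j.1*ℓ+u'.1 < s.1*ℓ+u.1 then y ⟨j.1*ℓ+u'.1, lt_trans hj' hpf⟩ else y0) = z j u'
      rw [dif_pos hlt]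
      exact splitEquiv_lo hℓ z w j u'.2 _
    have hcnt : cnt W c2 (prevz (ℓ := ℓ) n y0
        (fun i : Fin (s.1*ℓ+u.1) => y ⟨i.1, lt_trans i.2 hpf⟩)) ((s.1*ℓ+u.1)/ℓ)
        = cnt W c2 z s.1 := by
      rw [e1]
      exact cnt_congr W c2 _ _ s.1 hslot
    have henc : (comp W hℓ c2 x0 y0 n r).enc m ⟨s.1*ℓ+u.1, hpf⟩
          (fun i => y ⟨i.1, lt_trans i.2 hpf⟩)
        = c2.enc (bitOf r m (cnt W c2 z s.1)) u (fun i => z s ⟨i.1, lt_trans i.2 u.2⟩) := by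
      rw [comp_enc, dif_pos (show s.1*ℓ+u.1 < (n/ℓ)*ℓ from slot_time_lt' s u.2)]
      apply enc2_congr c2 _ _ (congrArg (bitOf r m) hcnt) (Fin.ext e2)
      intro i
      have hiu : i.1 < u.1 := lt_of_lt_of_eq i.2 e2
      have hidx : ((s.1*ℓ+u.1)/ℓ)*ℓ + i.1 = s.1*ℓ + i.1 := by rw [e1]
      exact (congrArg y (Fin.ext hidx)).trans
        (splitEquiv_lo hℓ z w s (lt_trans hiu u.2) (slot_time_lt s (lt_trans hiu u.2)))
    show W ((comp W hℓ c2 x0 y0 n r).enc m ⟨s.1*ℓ+u.1, hpf⟩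
        (fun i => y ⟨i.1, lt_trans i.2 hpf⟩)) (y ⟨s.1*ℓ+u.1, hpf⟩)
      = W (c2.enc (bitOf r m (cnt W c2 z s.1)) u (fun i => z s ⟨i.1, lt_trans i.2 u.2⟩)) (z s u)
    rw [henc, hyt]
  · apply Finset.prod_congr rfl
    intro w' _
    show W ((comp W hℓ c2 x0 y0 n r).enc m ⟨(n/ℓ)*ℓ + w'.1, _⟩ _) (y ⟨(n/ℓ)*ℓ + w'.1, _⟩)
      = W x0 (w w')
    have hx : ∀ (t : Fin n) (h : Fin t.1 → Y), ¬ t.1 < (n/ℓ)*ℓ →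
        (comp W hℓ c2 x0 y0 n r).enc m t h = x0 := fun t h ht => by rw [comp_enc, dif_neg ht]
    congr 1
    · exact hx _ _ (by show ¬((n/ℓ)*ℓ + w'.1 < (n/ℓ)*ℓ); omega)
    · exact splitEquiv_hi hℓ z w w' _

lemma dec_none_eq_one (W : X → Y → ℝ) (hW0 : ∀ x y, 0 ≤ W x y) {M n : ℕ}
    (c : FBCode X Y M n 1) (hPerr : Perr W c = 0) {m1 m2 : Fin M} (hne : m1 ≠ m2)
    {y : Fin n → Y} (h1 : 0 < outProb W c m1 y) (h2 : 0 < outProb W c m2 y) :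
    c.dec y none = 1 := by
  have hz : ∀ S : Finset (Fin M), c.dec y (some S) = 0 := by
    intro S
    by_contra hS
    have hcard := c.dec_size y S hS
    have hmiss : m1 ∉ S ∨ m2 ∉ S := by
      by_contra hc
      push_neg at hc
      have hsub : ({m1, m2} : Finset (Fin M)) ⊆ S := by
        intro a ha
        rcases Finset.mem_insert.mp ha with rfl | ha
        · exact hc.1
        · rw [Finset.mem_singleton.mp ha]; exact hc.2
      have := Finset.card_le_card hsub
      rw [Finset.card_pair hne] at this
      omega
    rcases hmiss with h | h
    · exact hS (dec_eq_zero_of_errorfree W hW0 c hPerr h1 h)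
    · exact hS (dec_eq_zero_of_errorfree W hW0 c hPerr h2 h)
  have := dec_none_sum c y
  rw [Finset.sum_eq_zero (fun S _ => hz S)] at this
  linarith

lemma comp_decode_correct (W : X → Y → ℝ) (hW0 : ∀ x y, 0 ≤ W x y) {ℓ : ℕ} (hℓ : 0 < ℓ)
    (c2 : FBCode X Y 2 ℓ 1) (x0 : X) (y0 : Y) (n r : ℕ) (m : Fin (2^r))
    (y : Fin n → Y) (hy : 0 < outProb W (comp W hℓ c2 x0 y0 n r) m y)
    (hr : r ≤ cnt W c2 (slotsOf (ℓ := ℓ) n y) (n/ℓ)) :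
    (fun i : Fin r => decBits W c2 (slotsOf (ℓ := ℓ) n y) i.1) = finFunctionFinEquiv.symm m := by
  obtain ⟨p, hp⟩ : ∃ p, y = (splitEquiv ℓ n hℓ) p :=
    ⟨(splitEquiv ℓ n hℓ).symm y, ((splitEquiv ℓ n hℓ).apply_symm_apply y).symm⟩
  obtain ⟨zz, ww⟩ := p
  subst hp
  have hzz : slotsOf (ℓ := ℓ) n ((splitEquiv ℓ n hℓ) (zz, ww)) = zz := splitEquiv_fst hℓ zz ww
  rw [hzz] at hr ⊢
  rw [comp_outProb] at hy
  have hslotpos : ∀ s : Fin (n/ℓ), 0 < outProb W c2 (bitOf r m (cnt W c2 zz s.1)) (zz s) := by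
    intro s
    rcases eq_or_lt_of_le (outProb_nonneg W hW0 c2 _ (zz s)) with h0 | h
    · rw [Finset.prod_eq_zero (Finset.mem_univ s) h0.symm, zero_mul] at hy
      exact absurd hy (lt_irrefl 0)
    · exact h
  funext i
  have hex : ∃ j : Fin (n/ℓ), succSlot W c2 (zz j) ∧ cnt W c2 zz j.1 = i.1 :=
    cnt_exists W c2 zz i.1 (lt_of_lt_of_le i.2 hr)
  unfold decBits
  rw [dif_pos hex]
  obtain ⟨hjsucc, hjcnt⟩ := hex.choose_spec
  have hbit : bitOf r m (cnt W c2 zz hex.choose.1) = finFunctionFinEquiv.symm m i := by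
    rw [hjcnt]
    unfold bitOf
    rw [dif_pos i.2]
  have hpos := hslotpos hex.choose
  rw [hbit] at hpos
  set b := finFunctionFinEquiv.symm m i with hb
  by_cases hb0 : b = 0
  · rw [hb0] at hpos
    unfold sdec
    rw [if_pos hpos]
    exact hb0.symm
  · have hb1 : b = 1 := by
      have h2 := b.2
      have h0 : b.1 ≠ 0 := fun h => hb0 (Fin.ext h)
      have e : ((1 : Fin 2) : ℕ) = 1 := rfl
      exact Fin.ext (by omega)
    rw [hb1] at hpos
    have hna : ¬ (0 < outProb W c2 0 (zz hex.choose)) := by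
      intro hP0
      unfold succSlot at hjsucc
      rcases hjsucc with ⟨_, hn1⟩ | ⟨_, hn0⟩
      · exact hn1 hpos
      · exact hn0 hP0
    unfold sdec
    rw [if_neg hna]
    exact hb1.symm

lemma comp_Perr (W : X → Y → ℝ) (hW0 : ∀ x y, 0 ≤ W x y) {ℓ : ℕ} (hℓ : 0 < ℓ)
    (c2 : FBCode X Y 2 ℓ 1) (x0 : X) (y0 : Y) (n r : ℕ) :
    Perr W (comp W hℓ c2 x0 y0 n r) = 0 := by
  rw [Perr]
  rw [Finset.sum_eq_zero, mul_zero]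
  intro m _
  rw [Finset.sum_eq_zero]
  intro y _
  by_cases hy : outProb W (comp W hℓ c2 x0 y0 n r) m y = 0
  · rw [hy, zero_mul]
  have hpos : 0 < outProb W (comp W hℓ c2 x0 y0 n r) m y :=
    lt_of_le_of_ne (outProb_nonneg W hW0 _ m y) (Ne.symm hy)
  rw [Finset.sum_eq_zero, mul_zero]
  intro S _
  by_cases hmS : m ∈ S
  · rw [if_pos hmS]
  rw [if_neg hmS, comp_dec]
  have hne : ¬ ((some S : Option (Finset (Fin (2^r)))) = Dout W c2 n r y) := by
    intro hSD
    unfold Dout at hSD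
    by_cases hc : r ≤ cnt W c2 (slotsOf (ℓ := ℓ) n y) (n/ℓ)
    · rw [if_pos hc] at hSD
      have hSeq : S = {finFunctionFinEquiv
          (fun i : Fin r => decBits W c2 (slotsOf (ℓ := ℓ) n y) i.1)} :=
        Option.some_injective _ hSD
      rw [comp_decode_correct W hW0 hℓ c2 x0 y0 n r m y hpos hc,
        Equiv.apply_symm_apply] at hSeq
      exact hmS (hSeq ▸ Finset.mem_singleton_self m)
    · rw [if_neg hc] at hSD
      exact Option.some_ne_none _ hSD
  rw [if_neg hne]

lemma slot_erasure_bound [Nonempty Y] (W : X → Y → ℝ) (hW0 : ∀ x y, 0 ≤ W x y)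
    {ℓ : ℕ} (c2 : FBCode X Y 2 ℓ 1) (hc2 : Perr W c2 = 0) (b : Fin 2) :
    ∑ zz ∈ Finset.univ.filter (fun zz : Fin ℓ → Y => ¬ succSlot W c2 zz),
      outProb W c2 b zz ≤ 2 * Pera W c2 := by
  have hstep : ∀ zz ∈ Finset.univ.filter (fun zz : Fin ℓ → Y => ¬ succSlot W c2 zz),
      outProb W c2 b zz ≤ outProb W c2 b zz * c2.dec zz none := by
    intro zz hzz
    rcases eq_or_lt_of_le (outProb_nonneg W hW0 c2 b zz) with h0 | hpos
    · rw [← h0, zero_mul]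
    have hnsucc : ¬ succSlot W c2 zz := (Finset.mem_filter.mp hzz).2
    have hboth : 0 < outProb W c2 0 zz ∧ 0 < outProb W c2 1 zz := by
      unfold succSlot at hnsucc
      by_cases hb0 : b = 0
      · rw [hb0] at hpos
        refine ⟨hpos, ?_⟩
        by_contra hP1
        exact hnsucc (Or.inl ⟨hpos, hP1⟩)
      · have hb1 : b = 1 := by
          have h2 := b.2
          have h0 : b.1 ≠ 0 := fun h => hb0 (Fin.ext h)
          have e : ((1 : Fin 2) : ℕ) = 1 := rfl
          exact Fin.ext (by omega)
        rw [hb1] at hpos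
        refine ⟨?_, hpos⟩
        by_contra hP0
        exact hnsucc (Or.inr ⟨hpos, hP0⟩)
    have hnone : c2.dec zz none = 1 :=
      dec_none_eq_one W hW0 c2 hc2 (by decide : (0 : Fin 2) ≠ 1) hboth.1 hboth.2
    rw [hnone, mul_one]
  have h1 : ∑ zz ∈ Finset.univ.filter (fun zz : Fin ℓ → Y => ¬ succSlot W c2 zz),
      outProb W c2 b zz ≤ ∑ zz : Fin ℓ → Y, outProb W c2 b zz * c2.dec zz none := by
    calc ∑ zz ∈ Finset.univ.filter (fun zz : Fin ℓ → Y => ¬ succSlot W c2 zz),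
        outProb W c2 b zz
        ≤ ∑ zz ∈ Finset.univ.filter (fun zz : Fin ℓ → Y => ¬ succSlot W c2 zz),
          outProb W c2 b zz * c2.dec zz none := Finset.sum_le_sum hstep
      _ ≤ ∑ zz : Fin ℓ → Y, outProb W c2 b zz * c2.dec zz none :=
          Finset.sum_le_sum_of_subset_of_nonneg (Finset.filter_subset _ _)
            (fun zz _ _ => mul_nonneg (outProb_nonneg W hW0 c2 b zz) (c2.dec_nonneg zz none))
  have h2 : ∑ zz : Fin ℓ → Y, outProb W c2 b zz * c2.dec zz none
      ≤ ∑ b' : Fin 2, ∑ zz : Fin ℓ → Y, outProb W c2 b' zz * c2.dec zz none :=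
    Finset.single_le_sum (f := fun b' => ∑ zz : Fin ℓ → Y, outProb W c2 b' zz * c2.dec zz none)
      (fun b' _ => Finset.sum_nonneg fun zz _ =>
        mul_nonneg (outProb_nonneg W hW0 c2 b' zz) (c2.dec_nonneg zz none))
      (Finset.mem_univ b)
  have h3 : (2:ℝ) * Pera W c2
      = ∑ b' : Fin 2, ∑ zz : Fin ℓ → Y, outProb W c2 b' zz * c2.dec zz none := by
    rw [Pera]
    norm_num
    ring
  linarith

lemma comp_Pera_le [Nonempty Y] (W : X → Y → ℝ) (hW0 : ∀ x y, 0 ≤ W x y)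
    (hW1 : ∀ x, ∑ y, W x y = 1) {ℓ : ℕ} (hℓ : 0 < ℓ) (c2 : FBCode X Y 2 ℓ 1)
    (hc2 : Perr W c2 = 0) (x0 : X) (y0 : Y) (n r : ℕ) (hrk : r ≤ n/ℓ) :
    Pera W (comp W hℓ c2 x0 y0 n r) ≤
      ((n/ℓ).choose (n/ℓ - r + 1)) * (2 * Pera W c2) ^ (n/ℓ - r + 1) := by
  have hε0 : (0:ℝ) ≤ 2 * Pera W c2 := by
    have := Pera_nonneg W hW0 c2
    linarith
  set k := n/ℓ with hk
  set ε := 2 * Pera W c2 with hε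
  set j := k - r + 1 with hj
  set C := comp W hℓ c2 x0 y0 n r with hC
  have hboundnn : (0:ℝ) ≤ (k.choose j : ℝ) * ε ^ j :=
    mul_nonneg (Nat.cast_nonneg _) (pow_nonneg hε0 _)
  -- per-message erasure bound
  have hEm : ∀ m : Fin (2^r),
      ∑ y : Fin n → Y, outProb W C m y * C.dec y none ≤ (k.choose j : ℝ) * ε ^ j := by
    intro m
    rw [← Equiv.sum_comp (splitEquiv ℓ n hℓ) (fun y => outProb W C m y * C.dec y none),
      Fintype.sum_prod_type]
    -- the decoding indicator
    have hdecI : ∀ (z : Fin k → (Fin ℓ → Y)) (ww : Fin (n - k*ℓ) → Y),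
        C.dec ((splitEquiv ℓ n hℓ) (z, ww)) none
        = (if r ≤ cnt W c2 z k then (0:ℝ) else 1) := by
      intro z ww
      rw [hC, comp_dec]
      unfold Dout
      rw [splitEquiv_fst]
      by_cases hc : r ≤ cnt W c2 z k
      · rw [if_pos hc, if_pos hc]
        simp
      · rw [if_neg hc, if_neg hc]
        simp
    have hQnn : ∀ (z : Fin k → (Fin ℓ → Y)),
        (0:ℝ) ≤ ∏ s : Fin k, outProb W c2 (bitOf r m (cnt W c2 z s.1)) (z s) :=
      fun z => Finset.prod_nonneg (fun s _ => outProb_nonneg W hW0 c2 _ _)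
    have hrem : ∑ ww : Fin (n - k*ℓ) → Y, ∏ w' : Fin (n - k*ℓ), W x0 (ww w') = 1 := by
      have := adaptive_sum (Z := Y) (k := n - k*ℓ) (fun _ _ v => W x0 v)
        (fun _ _ _ _ => rfl) (fun _ _ => hW1 x0)
      exact this
    have hstep1 : ∀ z : Fin k → (Fin ℓ → Y),
        ∑ ww : Fin (n - k*ℓ) → Y,
          outProb W C m ((splitEquiv ℓ n hℓ) (z, ww)) * C.dec ((splitEquiv ℓ n hℓ) (z, ww)) none
        = (∏ s : Fin k, outProb W c2 (bitOf r m (cnt W c2 z s.1)) (z s))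
          * (if r ≤ cnt W c2 z k then (0:ℝ) else 1) := by
      intro z
      have : ∀ ww : Fin (n - k*ℓ) → Y,
          outProb W C m ((splitEquiv ℓ n hℓ) (z, ww)) * C.dec ((splitEquiv ℓ n hℓ) (z, ww)) none
          = ((∏ s : Fin k, outProb W c2 (bitOf r m (cnt W c2 z s.1)) (z s))
              * (if r ≤ cnt W c2 z k then (0:ℝ) else 1)) * ∏ w' : Fin (n - k*ℓ), W x0 (ww w') := by
        intro ww
        rw [hC, comp_outProb, hdecI z ww]
        ring
      rw [Finset.sum_congr rfl (fun ww _ => this ww), ← Finset.mul_sum, hrem, mul_one]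
    rw [Finset.sum_congr rfl (fun z _ => hstep1 z)]
    -- indicator comparison
    have hind : ∀ z : Fin k → (Fin ℓ → Y),
        (∏ s : Fin k, outProb W c2 (bitOf r m (cnt W c2 z s.1)) (z s))
          * (if r ≤ cnt W c2 z k then (0:ℝ) else 1)
        ≤ (∏ s : Fin k, outProb W c2 (bitOf r m (cnt W c2 z s.1)) (z s))
          * (if j ≤ (Finset.univ.filter (fun s : Fin k => ¬ succSlot W c2 (z s))).card
              then (1:ℝ) else 0) := by
      intro z
      apply mul_le_mul_of_nonneg_left _ (hQnn z)
      by_cases hc : r ≤ cnt W c2 z k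
      · rw [if_pos hc]
        split
        · norm_num
        · exact le_refl 0
      · rw [if_neg hc]
        have hcnt_filter : cnt W c2 z k
            = (Finset.univ.filter (fun s : Fin k => succSlot W c2 (z s))).card := by
          unfold cnt
          congr 1
          apply Finset.filter_congr
          intro s _
          simp [s.2]
        have hsplit := Finset.card_filter_add_card_filter_not
          (s := (Finset.univ : Finset (Fin k))) (p := fun s => succSlot W c2 (z s))
        rw [Finset.card_univ, Fintype.card_fin] at hsplit
        rw [if_pos]
        push_neg at hc
        rw [hcnt_filter] at hc
        omega
    calc ∑ z : Fin k → (Fin ℓ → Y), (∏ s : Fin k, outProb W c2 (bitOf r m (cnt W c2 z s.1)) (z s))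
          * (if r ≤ cnt W c2 z k then (0:ℝ) else 1)
        ≤ ∑ z : Fin k → (Fin ℓ → Y), (∏ s : Fin k, outProb W c2 (bitOf r m (cnt W c2 z s.1)) (z s))
          * (if j ≤ (Finset.univ.filter (fun s : Fin k => ¬ succSlot W c2 (z s))).card
              then (1:ℝ) else 0) := Finset.sum_le_sum (fun z _ => hind z)
      _ ≤ (k.choose j : ℝ) * ε ^ j := by
          apply adaptive_tail (Bp := fun zz : Fin ℓ → Y => ¬ succSlot W c2 zz) ε hε0
            (Q := fun s z w => outProb W c2 (bitOf r m (cnt W c2 z s.1)) w) j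
          · intro s z₁ z₂ h
            funext v
            have : cnt W c2 z₁ s.1 = cnt W c2 z₂ s.1 :=
              cnt_congr W c2 z₁ z₂ s.1 (fun jj hjj => h jj hjj)
            rw [this]
          · intro s z w
            exact outProb_nonneg W hW0 c2 _ w
          · intro s z
            exact sum_outProb W hW1 c2 _
          · intro s z
            exact slot_erasure_bound W hW0 c2 hc2 _
  -- average over messages
  rw [Pera]
  have htot : ∑ m : Fin (2^r), ∑ y : Fin n → Y, outProb W C m y * C.dec y none
      ≤ (2^r : ℝ) * ((k.choose j : ℝ) * ε ^ j) := by
    calc ∑ m : Fin (2^r), ∑ y : Fin n → Y, outProb W C m y * C.dec y none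
        ≤ ∑ _m : Fin (2^r), (k.choose j : ℝ) * ε ^ j := Finset.sum_le_sum (fun m _ => hEm m)
      _ = (2^r : ℝ) * ((k.choose j : ℝ) * ε ^ j) := by
          rw [Finset.sum_const, Finset.card_univ, Fintype.card_fin, nsmul_eq_mul]
          push_cast
          ring
  have hMinv : (0:ℝ) ≤ ((2^r : ℕ) : ℝ)⁻¹ := by positivity
  calc ((2^r : ℕ) : ℝ)⁻¹ * ∑ m : Fin (2^r), ∑ y : Fin n → Y, outProb W C m y * C.dec y none
      ≤ ((2^r : ℕ) : ℝ)⁻¹ * ((2^r : ℝ) * ((k.choose j : ℝ) * ε ^ j)) :=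
        mul_le_mul_of_nonneg_left htot hMinv
    _ = (k.choose j : ℝ) * ε ^ j := by
        rw [← mul_assoc]
        have h2r : ((2^r : ℕ) : ℝ) = (2:ℝ)^r := by push_cast; ring
        rw [h2r, inv_mul_cancel₀ (by positivity), one_mul]

end Composite
section Asymptotics

open Filter Finset

lemma choose_le_two_pow (k j : ℕ) : k.choose j ≤ 2^k := by
  rcases le_or_gt j k with h | h
  · calc k.choose j ≤ ∑ m ∈ Finset.range (k+1), k.choose m :=
        Finset.single_le_sum (fun _ _ => Nat.zero_le _) (Finset.mem_range.mpr (by omega))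
      _ = 2^k := Nat.sum_range_choose k
  · rw [Nat.choose_eq_zero_of_lt h]
    exact Nat.zero_le _

lemma tendsto_nat_div_real (ℓ0 : ℕ) (hℓ0 : 0 < ℓ0) :
    Tendsto (fun n : ℕ => ((n / ℓ0 : ℕ) : ℝ) / n) atTop (nhds (1/(ℓ0:ℝ))) := by
  have hℓ0R : (0:ℝ) < ℓ0 := by exact_mod_cast hℓ0
  apply tendsto_of_tendsto_of_tendsto_of_le_of_le'
    (g := fun n : ℕ => 1/(ℓ0:ℝ) - 1/n) (h := fun _ : ℕ => 1/(ℓ0:ℝ))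
  · have h1 : Tendsto (fun n : ℕ => 1/(n:ℝ)) atTop (nhds 0) := by
      simpa using tendsto_one_div_atTop_nhds_zero_nat (𝕜 := ℝ)
    have := (tendsto_const_nhds (x := 1/(ℓ0:ℝ)) (f := atTop (α := ℕ))).sub h1
    simpa using this
  · exact tendsto_const_nhds
  · filter_upwards [eventually_ge_atTop 1] with n hn
    have hnR : (0:ℝ) < n := by exact_mod_cast hn
    have hdm : ℓ0 * (n / ℓ0) + n % ℓ0 = n := Nat.div_add_mod n ℓ0
    have hdmR : (ℓ0:ℝ) * ((n / ℓ0 : ℕ):ℝ) + ((n % ℓ0 : ℕ):ℝ) = n := by exact_mod_cast hdm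
    have hmodR : ((n % ℓ0 : ℕ):ℝ) < ℓ0 := by exact_mod_cast Nat.mod_lt n hℓ0
    rw [div_sub_div _ _ (ne_of_gt hℓ0R) (ne_of_gt hnR), div_le_div_iff₀
      (by positivity) hnR]
    have hkR : (0:ℝ) ≤ ((n / ℓ0 : ℕ):ℝ) := Nat.cast_nonneg _
    nlinarith
  · filter_upwards [eventually_ge_atTop 1] with n hn
    have hnR : (0:ℝ) < n := by exact_mod_cast hn
    have hdm : ℓ0 * (n / ℓ0) ≤ n := Nat.mul_div_le n ℓ0
    have hdmR : (ℓ0:ℝ) * ((n / ℓ0 : ℕ):ℝ) ≤ n := by exact_mod_cast hdm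
    rw [div_le_div_iff₀ hnR hℓ0R]
    nlinarith

lemma nat_sqrt_le_real_sqrt (n : ℕ) : ((n.sqrt : ℕ) : ℝ) ≤ Real.sqrt n := by
  rw [show ((n.sqrt : ℕ) : ℝ) = Real.sqrt (((n.sqrt * n.sqrt : ℕ) : ℝ)) by
    push_cast
    rw [show ((n.sqrt : ℝ) * n.sqrt) = (n.sqrt:ℝ)^2 by ring, Real.sqrt_sq (Nat.cast_nonneg _)]]
  exact Real.sqrt_le_sqrt (by exact_mod_cast Nat.sqrt_le n)

lemma tendsto_sqrt_div : Tendsto (fun n : ℕ => ((n.sqrt + 1 : ℕ) : ℝ) / n) atTop (nhds 0) := by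
  apply squeeze_zero' (g := fun n : ℕ => ((n:ℝ))^(-(1/2:ℝ)) + 2/n)
  · filter_upwards [eventually_ge_atTop 1] with n hn
    positivity
  · filter_upwards [eventually_ge_atTop 1] with n hn
    have hnR : (0:ℝ) < n := by exact_mod_cast hn
    have h1 : ((n.sqrt + 1 : ℕ) : ℝ) ≤ Real.sqrt n + 1 := by
      push_cast
      have := nat_sqrt_le_real_sqrt n
      linarith
    have h2 : Real.sqrt n / n = ((n:ℝ))^(-(1/2:ℝ)) := by
      rw [Real.sqrt_eq_rpow]
      rw [show -(1/2:ℝ) = 1/2 - 1 by norm_num, Real.rpow_sub hnR, Real.rpow_one]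
    calc ((n.sqrt + 1 : ℕ) : ℝ) / n ≤ (Real.sqrt n + 1) / n := by gcongr
      _ = Real.sqrt n / n + 1/n := by ring
      _ ≤ ((n:ℝ))^(-(1/2:ℝ)) + 2/n := by
          rw [h2]
          have : (1:ℝ)/n ≤ 2/n := by gcongr <;> norm_num
          linarith
  · have h1 : Tendsto (fun n : ℕ => ((n:ℝ))^(-(1/2:ℝ))) atTop (nhds 0) :=
      (tendsto_rpow_neg_atTop (by norm_num)).comp tendsto_natCast_atTop_atTop
    have h2 : Tendsto (fun n : ℕ => 2/(n:ℝ)) atTop (nhds 0) := by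
      have := tendsto_one_div_atTop_nhds_zero_nat (𝕜 := ℝ)
      have h3 := this.const_mul (2:ℝ)
      simpa [div_eq_mul_inv, mul_comm] using h3
    simpa using h1.add h2

lemma tendsto_nat_sqrt_atTop : Tendsto (fun n : ℕ => n.sqrt) atTop atTop := by
  apply tendsto_atTop_atTop.mpr
  intro b
  exact ⟨b*b, fun n hn => Nat.le_sqrt.mpr hn⟩

lemma eventually_r_le_k (ℓ0 : ℕ) (hℓ0 : 0 < ℓ0) :
    ∀ᶠ n in atTop, n.sqrt + 1 ≤ n / ℓ0 := by
  filter_upwards [tendsto_nat_sqrt_atTop.eventually_ge_atTop (3*ℓ0)] with n hn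
  have h3 : 3 ≤ n.sqrt := by
    calc 3 = 3*1 := by ring
    _ ≤ 3*ℓ0 := by omega
    _ ≤ n.sqrt := hn
  rw [Nat.le_div_iff_mul_le hℓ0]
  calc (n.sqrt + 1) * ℓ0 ≤ (2*n.sqrt) * ℓ0 := by
        apply Nat.mul_le_mul_right
        omega
    _ = n.sqrt * (2*ℓ0) := by ring
    _ ≤ n.sqrt * n.sqrt := by
        apply Nat.mul_le_mul_left
        omega
    _ ≤ n := Nat.sqrt_le n

end Asymptotics
section Final

open Filter Finset FBCode

variable {X Y : Type} [Fintype X] [Fintype Y]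

lemma Pera_le_one [Nonempty Y] (W : X → Y → ℝ) (hW0 : ∀ x y, 0 ≤ W x y)
    (hW1 : ∀ x, ∑ y, W x y = 1) {M n L : ℕ} (c : FBCode X Y M n L) (hM : 1 ≤ M) :
    Pera W c ≤ 1 := by
  rw [Pera]
  have hinner : ∀ m : Fin M, ∑ y : Fin n → Y, outProb W c m y * c.dec y none ≤ 1 := by
    intro m
    have h1 : ∀ y : Fin n → Y, outProb W c m y * c.dec y none ≤ outProb W c m y := by
      intro y
      have hd1 : c.dec y none ≤ 1 := by
        have := dec_none_sum c y
        have h2 : 0 ≤ ∑ S : Finset (Fin M), c.dec y (some S) :=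
          Finset.sum_nonneg (fun S _ => c.dec_nonneg y (some S))
        linarith
      calc outProb W c m y * c.dec y none ≤ outProb W c m y * 1 :=
            mul_le_mul_of_nonneg_left hd1 (outProb_nonneg W hW0 c m y)
        _ = outProb W c m y := mul_one _
    calc ∑ y : Fin n → Y, outProb W c m y * c.dec y none
        ≤ ∑ y : Fin n → Y, outProb W c m y := Finset.sum_le_sum (fun y _ => h1 y)
      _ = 1 := sum_outProb W hW1 c m
  have htot : ∑ m : Fin M, ∑ y : Fin n → Y, outProb W c m y * c.dec y none ≤ (M:ℝ) := by
    calc ∑ m : Fin M, ∑ y : Fin n → Y, outProb W c m y * c.dec y none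
        ≤ ∑ _m : Fin M, (1:ℝ) := Finset.sum_le_sum (fun m _ => hinner m)
      _ = (M:ℝ) := by simp
  have hMpos : (0:ℝ) < M := by exact_mod_cast hM
  calc (M:ℝ)⁻¹ * ∑ m : Fin M, ∑ y : Fin n → Y, outProb W c m y * c.dec y none
      ≤ (M:ℝ)⁻¹ * M := mul_le_mul_of_nonneg_left htot (by positivity)
    _ = 1 := inv_mul_cancel₀ (ne_of_gt hMpos)


end Final

/-- for a DMC with zero zero-error capacity, the zero-rate erasure
exponent of error-free feedback block codes (the supremum, over error-free reliable
sequences with rate tending to zero and message count tending to infinity, of the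
liminf erasure exponent) equals the two-message erasure exponent
`liminf (−log P_era(2,n,1))/n`. -/
theorem zero_rate_erasure_exponent_eq_two_message {X Y : Type}
    [Fintype X] [Fintype Y] [Nonempty X]
    (W : X → Y → ℝ) (hW0 : ∀ x y, 0 ≤ W x y) (hW1 : ∀ x, ∑ y, W x y = 1)
    (hC0 : ∀ x x' : X, ∃ y, 0 < W x y ∧ 0 < W x' y) :
    sSup {v : ℝ | ∃ M : ℕ → ℕ, ∃ c : (n : ℕ) → FBCode X Y (M n) n 1,
        Tendsto (fun n => (M n : ℝ)) atTop atTop ∧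
        Tendsto (fun n => Real.log (M n) / n) atTop (nhds 0) ∧
        (∀ n, FBCode.Perr W (c n) = 0) ∧
        Tendsto (fun n => FBCode.Pera W (c n)) atTop (nhds 0) ∧
        v = Filter.liminf (fun n => -Real.log (FBCode.Pera W (c n)) / n) atTop}
      = Filter.liminf
          (fun n => -Real.log (PeraMin (X := X) (Y := Y) W 2 n 1) / n) atTop := by
  classical
  have hNY : Nonempty Y := nonempty_Y W hW1
  obtain ⟨δ, hδpos, hδ⟩ := exists_delta W hC0
  have hδ1 : δ ≤ 1 := by
    obtain ⟨y, hy, _⟩ := hδ (Classical.arbitrary X) (Classical.arbitrary X)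
    exact le_trans hy (W_le_one W hW0 hW1 _ _)
  have hlogδ : Real.log δ ≤ 0 := Real.log_nonpos hδpos.le hδ1
  have hlog2 : 0 < Real.log 2 := Real.log_pos (by norm_num)
  set G : ℕ → ℝ := fun n => -Real.log (PeraMin (X := X) (Y := Y) W 2 n 1) / n with hG
  set E : ℝ := Filter.liminf G atTop with hE
  show sSup _ = E
  have hppos : ∀ n, 0 < PeraMin (X := X) (Y := Y) W 2 n 1 := fun n =>
    lt_of_lt_of_le (by positivity) (PeraMin_lb W hW0 hW1 hδpos hδ 2 n le_rfl)
  have hple : ∀ n, PeraMin (X := X) (Y := Y) W 2 n 1 ≤ 1 := fun n =>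
    PeraMin_le_one W hW0 hW1 2 n (by omega)
  have hg0 : ∀ n, 0 ≤ G n := by
    intro n
    apply div_nonneg _ (Nat.cast_nonneg n)
    have := Real.log_nonpos (hppos n).le (hple n)
    linarith
  have hgB : ∀ n, G n ≤ -Real.log δ + Real.log 2 := by
    intro n
    have h1 : δ^n/2 ≤ PeraMin (X := X) (Y := Y) W 2 n 1 :=
      PeraMin_lb W hW0 hW1 hδpos hδ 2 n le_rfl
    have h2 := Real.log_le_log (by positivity : (0:ℝ) < δ^n/2) h1
    rw [Real.log_div (by positivity) (by norm_num), Real.log_pow] at h2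
    rcases Nat.eq_zero_or_pos n with rfl | hn
    · show -Real.log _ / ((0:ℕ):ℝ) ≤ _
      rw [Nat.cast_zero, div_zero]
      linarith
    · have hnR : (0:ℝ) < n := by exact_mod_cast hn
      have hn1 : (1:ℝ) ≤ n := by exact_mod_cast hn
      show -Real.log (PeraMin (X := X) (Y := Y) W 2 n 1) / n ≤ _
      rw [div_le_iff₀ hnR]
      nlinarith
  have hgBound : IsBoundedUnder (· ≤ ·) atTop G :=
    isBoundedUnder_of ⟨-Real.log δ + Real.log 2, hgB⟩
  have hgBelow : IsBoundedUnder (· ≥ ·) atTop G := isBoundedUnder_of ⟨0, hg0⟩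
  have hgCo : IsCoboundedUnder (· ≥ ·) atTop G := hgBound.isCoboundedUnder_ge
  have hE0 : 0 ≤ E := le_liminf_of_le hgCo (Filter.Eventually.of_forall hg0)
  -- generic properties of admissible sequences
  have helem : ∀ (M : ℕ → ℕ) (c : (n : ℕ) → FBCode X Y (M n) n 1),
      Tendsto (fun n => (M n : ℝ)) atTop atTop →
      Tendsto (fun n => Real.log (M n) / n) atTop (nhds 0) →
      (∀ n, FBCode.Perr W (c n) = 0) →
      (∀ᶠ n in atTop, 0 ≤ -Real.log (FBCode.Pera W (c n)) / n) ∧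
      IsBoundedUnder (· ≤ ·) atTop (fun n => -Real.log (FBCode.Pera W (c n)) / n) := by
    intro M c hM hrate herr
    have hev2 : ∀ᶠ n in atTop, 2 ≤ M n := by
      filter_upwards [hM.eventually_ge_atTop (2:ℝ)] with n hn
      exact_mod_cast hn
    constructor
    · filter_upwards [hev2] with n hn
      have h1 : FBCode.Pera W (c n) ≤ 1 := Pera_le_one W hW0 hW1 (c n) (by omega)
      have h2 : 0 ≤ FBCode.Pera W (c n) := Pera_nonneg W hW0 (c n)
      have := Real.log_nonpos h2 h1
      apply div_nonneg _ (Nat.cast_nonneg n)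
      linarith
    · refine ⟨-Real.log δ + 1, ?_⟩
      have hrate1 : ∀ᶠ n in atTop, Real.log (M n) / n ≤ 1 := by
        filter_upwards [hrate.eventually (gt_mem_nhds (show (0:ℝ) < 1 by norm_num))] with n hn
        exact hn.le
      rw [Filter.eventually_map]
      filter_upwards [hev2, hrate1, eventually_ge_atTop 1] with n hn hr1 hn1
      have hnR : (0:ℝ) < n := by exact_mod_cast hn1
      have hMpos : (0:ℝ) < M n := by
        have h0 : (0:ℕ) < M n := by omega
        exact_mod_cast h0
      have hlb : δ^n / M n ≤ FBCode.Pera W (c n) :=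
        Pera_lb W hW0 hδpos hδ (c n) hn (herr n)
      have hlbpos : (0:ℝ) < δ^n / M n := by positivity
      have hlog := Real.log_le_log hlbpos hlb
      rw [Real.log_div (by positivity) (ne_of_gt hMpos), Real.log_pow] at hlog
      have hstep : -Real.log (FBCode.Pera W (c n)) / n
          ≤ (-(n * Real.log δ) + Real.log (M n)) / n := by
        gcongr
        linarith
      calc -Real.log (FBCode.Pera W (c n)) / n
          ≤ (-(n * Real.log δ) + Real.log (M n)) / n := hstep
        _ = -Real.log δ + Real.log (M n) / n := by
            field_simp
        _ ≤ -Real.log δ + 1 := by linarith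
  -- converse: every achievable exponent is at most E
  have hconv : ∀ v ∈ {v : ℝ | ∃ M : ℕ → ℕ, ∃ c : (n : ℕ) → FBCode X Y (M n) n 1,
      Tendsto (fun n => (M n : ℝ)) atTop atTop ∧
      Tendsto (fun n => Real.log (M n) / n) atTop (nhds 0) ∧
      (∀ n, FBCode.Perr W (c n) = 0) ∧
      Tendsto (fun n => FBCode.Pera W (c n)) atTop (nhds 0) ∧
      v = Filter.liminf (fun n => -Real.log (FBCode.Pera W (c n)) / n) atTop}, v ≤ E := by
    rintro v ⟨M, c, hM, hrate, herr, hP0, rfl⟩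
    obtain ⟨hunn, huB⟩ := helem M c hM hrate herr
    have hev2 : ∀ᶠ n in atTop, 2 ≤ M n := by
      filter_upwards [hM.eventually_ge_atTop (2:ℝ)] with n hn
      exact_mod_cast hn
    have hug : ∀ᶠ n in atTop,
        -Real.log (FBCode.Pera W (c n)) / n ≤ G n := by
      filter_upwards [hev2] with n hn
      have hple' : PeraMin (X := X) (Y := Y) W 2 n 1 ≤ FBCode.Pera W (c n) :=
        PeraMin2_le_Pera W hW0 (c n) hn (herr n)
      have hlog := Real.log_le_log (hppos n) hple'
      show _ ≤ -Real.log (PeraMin (X := X) (Y := Y) W 2 n 1) / n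
      gcongr
      all_goals first | positivity | linarith
    have huBelow : IsBoundedUnder (· ≥ ·) atTop
        (fun n => -Real.log (FBCode.Pera W (c n)) / n) := ⟨0, by
      rw [Filter.eventually_map]
      exact hunn⟩
    exact liminf_le_liminf hug huBelow hgCo
  -- achievability
  have hach : 0 < E → ∀ η : ℝ, 0 < η → ∃ v ∈ {v : ℝ | ∃ M : ℕ → ℕ,
      ∃ c : (n : ℕ) → FBCode X Y (M n) n 1,
      Tendsto (fun n => (M n : ℝ)) atTop atTop ∧
      Tendsto (fun n => Real.log (M n) / n) atTop (nhds 0) ∧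
      (∀ n, FBCode.Perr W (c n) = 0) ∧
      Tendsto (fun n => FBCode.Pera W (c n)) atTop (nhds 0) ∧
      v = Filter.liminf (fun n => -Real.log (FBCode.Pera W (c n)) / n) atTop},
      E - η ≤ v := by
    intro hEpos η hη
    set η' : ℝ := min η E with hη'
    have hη'pos : 0 < η' := lt_min hη hEpos
    have hη'E : η' ≤ E := min_le_right _ _
    have hη'η : η' ≤ η := min_le_left _ _
    -- choose the block length ℓ0
    have hev_g : ∀ᶠ ℓ in atTop, E - η'/4 < G ℓ :=
      eventually_lt_of_lt_liminf (by linarith) hgBelow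
    have hev_log8 : ∀ᶠ ℓ : ℕ in atTop, Real.log 8 / ℓ ≤ η'/4 := by
      have h1 : Tendsto (fun ℓ : ℕ => Real.log 8 * (1/(ℓ:ℝ))) atTop (nhds 0) := by
        have := tendsto_one_div_atTop_nhds_zero_nat.const_mul (Real.log 8)
        simpa using this
      filter_upwards [h1.eventually (gt_mem_nhds (show (0:ℝ) < η'/4 by positivity))] with ℓ hℓ
      have : Real.log 8 / ℓ = Real.log 8 * (1/(ℓ:ℝ)) := by ring
      rw [this]
      exact hℓ.le
    obtain ⟨ℓ0, hgℓ0, hlog8, hℓ0pos'⟩ :=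
      (hev_g.and (hev_log8.and (eventually_ge_atTop 1))).exists
    have hℓ0pos : 0 < ℓ0 := hℓ0pos'
    have hℓ0R : (0:ℝ) < ℓ0 := by exact_mod_cast hℓ0pos
    -- choose the two-message code c2
    have hlt : PeraMin (X := X) (Y := Y) W 2 ℓ0 1
        < 2 * PeraMin (X := X) (Y := Y) W 2 ℓ0 1 := by
      have := hppos ℓ0
      linarith
    have hSne : {r : ℝ | ∃ c : FBCode X Y 2 ℓ0 1,
        FBCode.Perr W c = 0 ∧ FBCode.Pera W c = r}.Nonempty :=
      ⟨1, eraseCode X Y 2 ℓ0 1, eraseCode_Perr W 2 ℓ0 1,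
        eraseCode_Pera W hW1 2 ℓ0 1 (by omega)⟩
    obtain ⟨pe, hpe_mem, hpe_lt⟩ :=
      (csInf_lt_iff (PeraMin_bddBelow W hW0 2 ℓ0 1) hSne).mp hlt
    obtain ⟨c2, hc2err, hc2pe⟩ := hpe_mem
    rw [← hc2pe] at hpe_lt
    have hc2pos : 0 < FBCode.Pera W c2 :=
      lt_of_lt_of_le (by positivity) (Pera_lb W hW0 hδpos hδ c2 le_rfl hc2err)
    set ε : ℝ := 2 * FBCode.Pera W c2 with hεdef
    have hεpos : 0 < ε := by positivity
    set x0 : X := Classical.arbitrary X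
    set y0 : Y := Classical.arbitrary Y
    set rr : ℕ → ℕ := fun n => n.sqrt + 1 with hrr
    set cs : (n : ℕ) → FBCode X Y (2^(rr n)) n 1 :=
      fun n => comp W hℓ0pos c2 x0 y0 n (rr n) with hcs
    set u : ℕ → ℝ := fun n => -Real.log (FBCode.Pera W (cs n)) / n with hu
    -- asymptotics of the parameters
    have hrtend : Tendsto rr atTop atTop :=
      tendsto_atTop_mono (fun n => Nat.le_succ _) tendsto_nat_sqrt_atTop
    have hMtend : Tendsto (fun n => ((2^(rr n) : ℕ) : ℝ)) atTop atTop := by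
      apply tendsto_natCast_atTop_atTop.comp
      exact tendsto_atTop_mono (fun n => (Nat.lt_two_pow_self (n := rr n)).le) hrtend
    have hrdiv : Tendsto (fun n : ℕ => ((rr n : ℕ) : ℝ) / n) atTop (nhds 0) :=
      tendsto_sqrt_div
    have hratetend : Tendsto (fun n : ℕ => Real.log ((2^(rr n) : ℕ) : ℝ) / n)
        atTop (nhds 0) := by
      have heq : ∀ n : ℕ, Real.log ((2^(rr n) : ℕ) : ℝ) / n
          = ((rr n : ℕ) : ℝ) / n * Real.log 2 := by
        intro n
        have : ((2^(rr n) : ℕ) : ℝ) = (2:ℝ)^(rr n) := by push_cast; ring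
        rw [this, Real.log_pow]
        ring
      rw [show (fun n : ℕ => Real.log ((2^(rr n) : ℕ) : ℝ) / n)
        = fun n : ℕ => ((rr n : ℕ) : ℝ) / n * Real.log 2 from funext heq]
      simpa using hrdiv.mul_const (Real.log 2)
    have herr : ∀ n, FBCode.Perr W (cs n) = 0 :=
      fun n => comp_Perr W hW0 hℓ0pos c2 x0 y0 n (rr n)
    have hM2 : ∀ n, 2 ≤ 2^(rr n) := by
      intro n
      calc 2 = 2^1 := by norm_num
      _ ≤ 2^(rr n) := Nat.pow_le_pow_right (by norm_num) (by simp [hrr])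
    have hPerapos : ∀ n, 0 < FBCode.Pera W (cs n) := by
      intro n
      exact lt_of_lt_of_le (by positivity)
        (Pera_lb W hW0 hδpos hδ (cs n) (hM2 n) (herr n))
    -- the lower bound sequence
    set L : ℕ → ℝ := fun n => ((n/ℓ0 : ℕ) : ℝ)/n * (-Real.log 2)
      + (((n/ℓ0) - rr n + 1 : ℕ) : ℝ)/n * (-Real.log ε) with hL
    have hLB : ∀ᶠ n in atTop, L n ≤ u n := by
      filter_upwards [eventually_r_le_k ℓ0 hℓ0pos, eventually_ge_atTop 1] with n hrk hn1
      have hnR : (0:ℝ) < n := by exact_mod_cast hn1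
      set k := n/ℓ0 with hk
      set j := k - rr n + 1 with hj
      have hbound := comp_Pera_le W hW0 hW1 hℓ0pos c2 hc2err x0 y0 n (rr n) hrk
      have hbound2 : FBCode.Pera W (cs n) ≤ (2:ℝ)^k * ε^j := by
        refine le_trans hbound ?_
        have hch : (k.choose j : ℝ) ≤ (2:ℝ)^k := by
          exact_mod_cast choose_le_two_pow k j
        apply mul_le_mul_of_nonneg_right hch (pow_nonneg hεpos.le j)
      have hlog := Real.log_le_log (hPerapos n) hbound2
      rw [Real.log_mul (by positivity) (by positivity), Real.log_pow, Real.log_pow] at hlog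
      show L n ≤ -Real.log (FBCode.Pera W (cs n)) / n
      have hLn : L n = -((k:ℝ) * Real.log 2 + (j:ℝ) * Real.log ε) / n := by
        rw [hL]
        ring
      rw [hLn]
      gcongr
      all_goals first | positivity | linarith
    -- the limit of the lower bound sequence
    have hkdiv : Tendsto (fun n : ℕ => ((n/ℓ0 : ℕ) : ℝ) / n) atTop (nhds (1/(ℓ0:ℝ))) :=
      tendsto_nat_div_real ℓ0 hℓ0pos
    have hjdiv : Tendsto (fun n : ℕ => (((n/ℓ0) - rr n + 1 : ℕ) : ℝ) / n) atTop
        (nhds (1/(ℓ0:ℝ))) := by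
      have hcongr : ∀ᶠ n in atTop, ((n/ℓ0 : ℕ) : ℝ)/n - ((rr n : ℕ) : ℝ)/n + 1/n
          = (((n/ℓ0) - rr n + 1 : ℕ) : ℝ) / n := by
        filter_upwards [eventually_r_le_k ℓ0 hℓ0pos] with n hrk
        have : (((n/ℓ0) - rr n + 1 : ℕ) : ℝ) = ((n/ℓ0 : ℕ) : ℝ) - ((rr n : ℕ) : ℝ) + 1 := by
          have hrk' : rr n ≤ n/ℓ0 := hrk
          push_cast [Nat.cast_sub hrk']
          ring
        rw [this]
        ring
      apply Tendsto.congr' hcongr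
      have h1 : Tendsto (fun n : ℕ => 1/(n:ℝ)) atTop (nhds 0) := by
        simpa using tendsto_one_div_atTop_nhds_zero_nat (𝕜 := ℝ)
      have := (hkdiv.sub hrdiv).add h1
      simpa using this
    have hLlim : Tendsto L atTop
        (nhds (1/(ℓ0:ℝ) * (-Real.log 2) + 1/(ℓ0:ℝ) * (-Real.log ε))) :=
      (hkdiv.mul_const _).add (hjdiv.mul_const _)
    have hLim_ge : E - η'/2 ≤ 1/(ℓ0:ℝ) * (-Real.log 2) + 1/(ℓ0:ℝ) * (-Real.log ε) := by
      have h2ε : Real.log (2*ε) = Real.log 2 + Real.log ε :=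
        Real.log_mul (by norm_num) (ne_of_gt hεpos)
      have h8p : Real.log (8 * PeraMin (X := X) (Y := Y) W 2 ℓ0 1)
          = Real.log 8 + Real.log (PeraMin (X := X) (Y := Y) W 2 ℓ0 1) :=
        Real.log_mul (by norm_num) (ne_of_gt (hppos ℓ0))
      have hmono : Real.log (2*ε) ≤ Real.log (8 * PeraMin (X := X) (Y := Y) W 2 ℓ0 1) := by
        apply Real.log_le_log (by positivity)
        rw [hεdef]
        linarith
      rw [h2ε, h8p] at hmono
      -- G ℓ0 = -log p(ℓ0) / ℓ0
      have hGℓ0 : G ℓ0 = -Real.log (PeraMin (X := X) (Y := Y) W 2 ℓ0 1) / ℓ0 := rfl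
      have hgood : E - η'/4 ≤ G ℓ0 := hgℓ0.le
      rw [hGℓ0] at hgood
      have hexpand : 1/(ℓ0:ℝ) * (-Real.log 2) + 1/(ℓ0:ℝ) * (-Real.log ε)
          = (-(Real.log 2 + Real.log ε)) / ℓ0 := by
        field_simp
        ring
      rw [hexpand]
      have hstep1 : (-(Real.log 8 + Real.log (PeraMin (X := X) (Y := Y) W 2 ℓ0 1))) / ℓ0
          ≤ (-(Real.log 2 + Real.log ε)) / ℓ0 := by
        gcongr
        all_goals first | positivity | linarith
      have hstep2 : (-(Real.log 8 + Real.log (PeraMin (X := X) (Y := Y) W 2 ℓ0 1))) / ℓ0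
          = -Real.log (PeraMin (X := X) (Y := Y) W 2 ℓ0 1) / ℓ0 - Real.log 8 / ℓ0 := by
        ring
      have : E - η'/2 ≤ (-(Real.log 8 + Real.log (PeraMin (X := X) (Y := Y) W 2 ℓ0 1))) / ℓ0 := by
        rw [hstep2]
        linarith
      linarith
    -- liminf bound
    have huBelow0 : ∀ᶠ n in atTop, 0 ≤ u n := by
      filter_upwards [] with n
      have h1 : FBCode.Pera W (cs n) ≤ 1 := Pera_le_one W hW0 hW1 (cs n) (by
        have := hM2 n; omega)
      have := Real.log_nonpos (hPerapos n).le h1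
      apply div_nonneg _ (Nat.cast_nonneg n)
      linarith
    have huB : IsBoundedUnder (· ≥ ·) atTop u := ⟨0, by
      rw [Filter.eventually_map]; exact huBelow0⟩
    have huCo : IsCoboundedUnder (· ≥ ·) atTop u := by
      apply Filter.IsBoundedUnder.isCoboundedUnder_ge
      obtain ⟨_, hB⟩ := helem (fun n => 2^(rr n)) cs hMtend hratetend herr
      exact hB
    have hliminf_ge : E - η'/2 ≤ Filter.liminf u atTop := by
      have h1 : Filter.liminf L atTop ≤ Filter.liminf u atTop :=
        liminf_le_liminf hLB hLlim.isBoundedUnder_ge huCo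
      rw [hLlim.liminf_eq] at h1
      linarith
    -- erasure probability tends to zero
    have hEq : E/4 < Filter.liminf u atTop := by
      have : E/2 ≤ Filter.liminf u atTop := by
        have : E - η'/2 ≥ E - E/2 := by linarith
        linarith
      linarith
    have hPera0 : Tendsto (fun n => FBCode.Pera W (cs n)) atTop (nhds 0) := by
      apply squeeze_zero' (g := fun n : ℕ => Real.exp (-(E/4) * n))
      · exact Filter.Eventually.of_forall (fun n => (hPerapos n).le)
      · filter_upwards [eventually_lt_of_lt_liminf hEq huB, eventually_ge_atTop 1]
          with n hun hn1
        have hnR : (0:ℝ) < n := by exact_mod_cast hn1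
        have hlogP : Real.log (FBCode.Pera W (cs n)) ≤ -(E/4) * n := by
          have h1 : E/4 < -Real.log (FBCode.Pera W (cs n)) / n := hun
          rw [lt_div_iff₀ hnR] at h1
          linarith
        calc FBCode.Pera W (cs n) = Real.exp (Real.log (FBCode.Pera W (cs n))) :=
              (Real.exp_log (hPerapos n)).symm
          _ ≤ Real.exp (-(E/4) * n) := Real.exp_le_exp.mpr hlogP
      · apply Real.tendsto_exp_atBot.comp
        have h1 : Tendsto (fun n : ℕ => (n:ℝ)) atTop atTop := tendsto_natCast_atTop_atTop
        have h2 : Tendsto (fun x : ℝ => -(E/4) * x) atTop atBot :=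
          Tendsto.const_mul_atTop_of_neg (by linarith) tendsto_id
        exact h2.comp h1
    refine ⟨Filter.liminf u atTop, ⟨fun n => 2^(rr n), cs, hMtend, hratetend, herr,
      hPera0, rfl⟩, ?_⟩
    linarith
  -- endgame
  by_cases hEpos : 0 < E
  · have hachE := hach hEpos
    obtain ⟨v0, hv0S, _⟩ := hachE E hEpos
    have hbdd : BddAbove {v : ℝ | ∃ M : ℕ → ℕ, ∃ c : (n : ℕ) → FBCode X Y (M n) n 1,
        Tendsto (fun n => (M n : ℝ)) atTop atTop ∧
        Tendsto (fun n => Real.log (M n) / n) atTop (nhds 0) ∧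
        (∀ n, FBCode.Perr W (c n) = 0) ∧
        Tendsto (fun n => FBCode.Pera W (c n)) atTop (nhds 0) ∧
        v = Filter.liminf (fun n => -Real.log (FBCode.Pera W (c n)) / n) atTop} :=
      ⟨E, fun v hv => hconv v hv⟩
    apply le_antisymm
    · exact csSup_le ⟨v0, hv0S⟩ hconv
    · apply le_of_forall_pos_le_add
      intro εp hεp
      obtain ⟨v, hvS, hvge⟩ := hachE εp hεp
      have := le_csSup hbdd hvS
      linarith
  · have hEz : E = 0 := le_antisymm (not_lt.mp hEpos) hE0
    rcases Set.eq_empty_or_nonempty {v : ℝ | ∃ M : ℕ → ℕ,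
        ∃ c : (n : ℕ) → FBCode X Y (M n) n 1,
        Tendsto (fun n => (M n : ℝ)) atTop atTop ∧
        Tendsto (fun n => Real.log (M n) / n) atTop (nhds 0) ∧
        (∀ n, FBCode.Perr W (c n) = 0) ∧
        Tendsto (fun n => FBCode.Pera W (c n)) atTop (nhds 0) ∧
        v = Filter.liminf (fun n => -Real.log (FBCode.Pera W (c n)) / n) atTop}
      with hS | hS
    · rw [hS, Real.sSup_empty, hEz]
    · apply le_antisymm
      · exact csSup_le hS (fun v hv => hconv v hv)
      · obtain ⟨v, hv⟩ := hS
        have hv0 : 0 ≤ v := by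
          obtain ⟨M, c, hM, hrate, herr, hP0, hveq⟩ := hv
          obtain ⟨hunn, huB⟩ := helem M c hM hrate herr
          rw [hveq]
          exact le_liminf_of_le huB.isCoboundedUnder_ge hunn
        rw [hEz]
        calc (0:ℝ) ≤ v := hv0
          _ ≤ _ := le_csSup ⟨E, fun w hw => hconv w hw⟩ hv
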